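/- arXiv:2307.00542 — 6 statements merged into one kernel-verified Lean document; each statement's English description precedes it below -/
import Mathlib

section
/- Let ξ(x) = 1 − √(1 − x). For every n ∈ ℕ with n ≥ 1 and every x ∈ [0, 1], the series Σ_{p=0}^∞ α_p^{(n)} x^p converges and equals (1 − √(1 − x))^n, where α_p^{(n)} = 0 for p < n and α_p^{(n)} = (n/(2p)) · 2^{n+1−2p} · C(2p − n − 1, p − 1) for p ≥ n (here C(·,·) denotes the binomial coefficient). -/
open Finset

/-- The coefficients `α_p^{(n)}` of the power series of `(1 - √(1-x))^n`:
`α_p^{(n)} = 0` for `p < n` and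
`α_p^{(n)} = (n/(2p)) · 2^{n+1-2p} · C(2p-n-1, p-1)` for `p ≥ n` (with `n ≥ 1`);
by convention `α_0^{(0)} = 1` and `α_p^{(0)} = 0` for `p ≥ 1`. -/
noncomputable def alph (n p : ℕ) : ℝ :=
  if n = 0 then (if p = 0 then 1 else 0)
  else if p < n then 0
  else ((n : ℝ) / (2 * p)) * (2 : ℝ) ^ ((n : ℤ) + 1 - 2 * (p : ℤ)) *
    (Nat.choose (2 * p - n - 1) (p - 1) : ℝ)

lemma alph_nonneg (n p : ℕ) : 0 ≤ alph n p := by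
  unfold alph
  split
  · split <;> norm_num
  · split
    · norm_num
    · positivity

lemma alph_lt (n p : ℕ) (hn : n ≠ 0) (hp : p < n) : alph n p = 0 := by
  simp [alph, hn, Nat.not_lt.mpr, hp]

lemma two_zpow (a : ℤ) (b : ℕ) : (2 : ℝ) ^ (a - 2 * (b : ℤ)) = (2:ℝ) ^ a / 4 ^ b := by
  rw [zpow_sub₀ (by norm_num : (2:ℝ) ≠ 0), zpow_mul, zpow_natCast]
  norm_num

lemma alph_one (p : ℕ) (hp : 1 ≤ p) :
    alph 1 p = 2 * (catalan (p - 1) : ℝ) / 4 ^ p := by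
  have h1 : ¬ (p < 1) := by omega
  have h2 : 2 * p - 1 - 1 = 2 * (p - 1) := by omega
  have h4 : ((p - 1) + 1) * catalan (p-1) = Nat.centralBinom (p-1) :=
    succ_mul_catalan_eq_centralBinom (p-1)
  have h5 : (p - 1) + 1 = p := by omega
  rw [h5] at h4
  have h3 : (2 * p - 1 - 1).choose (p - 1) = p * catalan (p - 1) := by
    rw [h2, ← Nat.centralBinom_eq_two_mul_choose, ← h4]
  have hz : ((1:ℕ) : ℤ) + 1 - 2 * (p : ℤ) = 2 - 2 * (p:ℤ) := by push_cast; ring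
  rw [alph, if_neg one_ne_zero, if_neg h1, h3, hz, two_zpow]
  have hp0 : (p : ℝ) ≠ 0 := Nat.cast_ne_zero.mpr (by omega)
  have h4p : (4:ℝ) ^ p ≠ 0 := by positivity
  push_cast
  field_simp

/-- `alph n n = 2⁻ⁿ` for `n ≥ 1`. -/
lemma alph_diag (n : ℕ) (hn : 1 ≤ n) : alph n n = (2:ℝ) ^ ((1:ℤ) - n) / 2 := by
  have h1 : ¬ (n < n) := lt_irrefl n
  have h2 : 2 * n - n - 1 = n - 1 := by omega
  rw [alph, if_neg (by omega : n ≠ 0), if_neg h1, h2, Nat.choose_self]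
  have hz : ((n:ℕ) : ℤ) + 1 - 2 * (n : ℤ) = 1 - (n:ℤ) := by ring
  rw [hz]
  have hn0 : (n : ℝ) ≠ 0 := Nat.cast_ne_zero.mpr (by omega)
  field_simp
  ring

/-- Bound: `centralBinom N ^ 2 * (2N+1) ≤ 16 ^ N`. -/
lemma centralBinom_sq_bound (N : ℕ) :
    Nat.centralBinom N ^ 2 * (2 * N + 1) ≤ 16 ^ N := by
  induction N with
  | zero => simp [Nat.centralBinom]
  | succ N ih =>
    have key : (N + 1) * Nat.centralBinom (N + 1) = 2 * (2 * N + 1) * Nat.centralBinom N :=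
      Nat.succ_mul_centralBinom_succ N
    have h1 : (N+1)^2 * (Nat.centralBinom (N+1) ^ 2 * (2 * (N+1) + 1))
        = 4 * (2*N+1) * (2*N+3) * (Nat.centralBinom N ^ 2 * (2*N+1)) := by
      have : ((N + 1) * Nat.centralBinom (N + 1))^2 = (2 * (2 * N + 1) * Nat.centralBinom N)^2 := by
        rw [key]
      nlinarith [this]
    have h2 : 4 * (2*N+1) * (2*N+3) * (Nat.centralBinom N ^ 2 * (2*N+1))
        ≤ 4 * (2*N+1) * (2*N+3) * 16 ^ N :=
      Nat.mul_le_mul_left _ ih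
    have h3 : 4 * (2*N+1) * (2*N+3) * 16 ^ N ≤ (N+1)^2 * 16 ^ (N+1) := by
      have : 4 * (2*N+1) * (2*N+3) ≤ (N+1)^2 * 16 := by nlinarith
      calc 4 * (2*N+1) * (2*N+3) * 16 ^ N ≤ ((N+1)^2 * 16) * 16 ^ N :=
            Nat.mul_le_mul_right _ this
        _ = (N+1)^2 * 16 ^ (N+1) := by ring
    have := le_trans (le_trans h1.le h2) h3
    exact Nat.le_of_mul_le_mul_left this (by positivity)

/-- Partial sums of `alph 1` telescope. -/
lemma alph_one_partial (N : ℕ) :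
    ∑ p ∈ range (N + 1), alph 1 p = 1 - (Nat.centralBinom N : ℝ) / 4 ^ N := by
  induction N with
  | zero => simp [alph, Nat.centralBinom]
  | succ N ih =>
    rw [Finset.sum_range_succ, ih, alph_one (N+1) (by omega)]
    have key : (N + 1) * Nat.centralBinom (N + 1) = 2 * (2 * N + 1) * Nat.centralBinom N :=
      Nat.succ_mul_centralBinom_succ N
    have key2 : ((N:ℝ) + 1) * Nat.centralBinom (N + 1) = 2 * (2 * N + 1) * Nat.centralBinom N := by
      exact_mod_cast key
    have key3 : ((N:ℝ) + 1) * catalan N = Nat.centralBinom N := by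
      exact_mod_cast succ_mul_catalan_eq_centralBinom N
    have hN : ((N:ℝ) + 1) ≠ 0 := by positivity
    have h4 : (4:ℝ) ^ N ≠ 0 := by positivity
    have h5 : (Nat.centralBinom (N+1) : ℝ) = 4 * Nat.centralBinom N - 2 * catalan N := by
      apply mul_left_cancel₀ hN
      linear_combination key2 + 2 * key3
    simp only [Nat.add_sub_cancel]
    rw [h5]
    field_simp
    ring

/-- The central binomial ratio tends to 0. -/
lemma centralBinom_ratio_nonneg (N : ℕ) : 0 ≤ (Nat.centralBinom N : ℝ) / 4 ^ N := by
  positivity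

lemma centralBinom_ratio_tendsto :
    Filter.Tendsto (fun N => (Nat.centralBinom N : ℝ) / 4 ^ N) Filter.atTop (nhds 0) := by
  have hub : ∀ N : ℕ, (Nat.centralBinom N : ℝ) / 4 ^ N ≤ Real.sqrt ((2 * (N:ℝ) + 1)⁻¹) := by
    intro N
    have hb : ((Nat.centralBinom N : ℝ)) ^ 2 * (2 * N + 1) ≤ 16 ^ N := by
      exact_mod_cast centralBinom_sq_bound N
    have h16 : ((4:ℝ) ^ N) ^ 2 = 16 ^ N := by
      rw [← pow_mul, pow_mul']
      norm_num
    have hsq : ((Nat.centralBinom N : ℝ) / 4 ^ N) ^ 2 ≤ (2 * (N:ℝ) + 1)⁻¹ := by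
      rw [div_pow, h16, div_le_iff₀ (by positivity), inv_mul_eq_div,
        le_div_iff₀ (by positivity)]
      linarith [hb]
    calc (Nat.centralBinom N : ℝ) / 4 ^ N
        = Real.sqrt (((Nat.centralBinom N : ℝ) / 4 ^ N) ^ 2) :=
          (Real.sqrt_sq (centralBinom_ratio_nonneg N)).symm
      _ ≤ Real.sqrt ((2 * (N:ℝ) + 1)⁻¹) := Real.sqrt_le_sqrt hsq
  have h1 : Filter.Tendsto (fun N : ℕ => 2 * (N:ℝ) + 1) Filter.atTop Filter.atTop := by
    apply Filter.tendsto_atTop_add_const_right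
    exact (tendsto_natCast_atTop_atTop).const_mul_atTop two_pos
  have h2 : Filter.Tendsto (fun N : ℕ => (2 * (N:ℝ) + 1)⁻¹) Filter.atTop (nhds 0) :=
    h1.inv_tendsto_atTop
  have h3 : Filter.Tendsto (fun N : ℕ => Real.sqrt ((2 * (N:ℝ) + 1)⁻¹)) Filter.atTop (nhds 0) := by
    have := (Real.continuous_sqrt.tendsto 0).comp h2
    rwa [Real.sqrt_zero] at this
  exact tendsto_of_tendsto_of_tendsto_of_le_of_le tendsto_const_nhds h3
    centralBinom_ratio_nonneg hub

lemma tendsto_partial_alph_one :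
    Filter.Tendsto (fun N : ℕ => ∑ p ∈ range (N + 1), alph 1 p) Filter.atTop (nhds 1) := by
  simp only [alph_one_partial]
  have := (tendsto_const_nhds (x := (1:ℝ)) (f := Filter.atTop (α := ℕ))).sub
    centralBinom_ratio_tendsto
  simpa using this

lemma summable_alph_one : Summable (fun p => alph 1 p) := by
  apply summable_of_sum_range_le (c := 1) (fun p => alph_nonneg 1 p)
  intro n
  match n with
  | 0 => simp
  | (N+1) =>
    rw [alph_one_partial N]
    linarith [centralBinom_ratio_nonneg N]

lemma hasSum_alph_one_one : HasSum (fun p => alph 1 p) 1 := by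
  have hs := summable_alph_one.hasSum
  have h1 := hs.tendsto_sum_nat
  have h2 : Filter.Tendsto (fun N : ℕ => ∑ p ∈ range (N + 1), alph 1 p) Filter.atTop
      (nhds (∑' p, alph 1 p)) := h1.comp (Filter.tendsto_add_atTop_nat 1)
  have := tendsto_nhds_unique h2 tendsto_partial_alph_one
  rwa [this] at hs

lemma alph_one_one : alph 1 1 = 1 / 2 := by
  rw [alph_one 1 le_rfl]
  norm_num

lemma conv_alph (p : ℕ) :
    ∑ k ∈ range (p + 1), alph 1 k * alph 1 (p - k)
      = 2 * alph 1 p - (if p = 1 then 1 else 0) := by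
  match p with
  | 0 => simp [alph]
  | 1 =>
    rw [Finset.sum_range_succ, Finset.sum_range_one]
    simp [alph, alph_one_one]
  | (m + 2) =>
    have h0 : alph 1 0 = 0 := by simp [alph]
    rw [Finset.sum_range_succ]
    rw [show m + 2 - (m + 2) = 0 from by omega, h0, mul_zero, add_zero]
    rw [Finset.range_eq_Ico, Finset.sum_eq_sum_Ico_succ_bot (by omega)]
    rw [h0, zero_mul, zero_add]
    have hre : ∑ k ∈ Ico 1 (m + 2), alph 1 k * alph 1 (m + 2 - k)
        = ∑ i ∈ range (m + 1), alph 1 (1 + i) * alph 1 (m + 1 - i) := by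
      rw [Finset.sum_Ico_eq_sum_range]
      apply Finset.sum_congr (by congr 1 <;> omega)
      intro i hi
      congr 2
      omega
    rw [hre]
    have hterm : ∀ i ∈ range (m + 1),
        alph 1 (1 + i) * alph 1 (m + 1 - i)
          = (4 / 4 ^ (m + 2)) * ((catalan i : ℝ) * (catalan (m - i) : ℝ)) := by
      intro i hi
      simp only [Finset.mem_range] at hi
      rw [alph_one (1 + i) (by omega), alph_one (m + 1 - i) (by omega)]
      rw [show 1 + i - 1 = i from by omega, show m + 1 - i - 1 = m - i from by omega]
      rw [div_mul_div_comm]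
      rw [show 4 ^ (1 + i) * 4 ^ (m + 1 - i) = (4:ℝ) ^ (m + 2) from by
        rw [← pow_add]; congr 1 <;> omega]
      field_simp
      ring
    rw [Finset.sum_congr rfl hterm, ← Finset.mul_sum]
    have hcat : ∑ i ∈ range (m + 1), (catalan i : ℝ) * (catalan (m - i) : ℝ)
        = (catalan (m + 1) : ℝ) := by
      rw [catalan_succ]
      push_cast [← Finset.sum_range fun i => catalan i * catalan (m - i)]
      ring
    rw [hcat, alph_one (m + 2) (by omega)]
    rw [show m + 2 - 1 = m + 1 from by omega]
    rw [if_neg (by omega : ¬ (m + 2 = 1)), sub_zero]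
    ring

lemma summable_alph_x (x : ℝ) (hx : x ∈ Set.Icc (0:ℝ) 1) :
    Summable (fun p => alph 1 p * x ^ p) := by
  obtain ⟨hx0, hx1⟩ := hx
  apply Summable.of_nonneg_of_le
    (fun p => mul_nonneg (alph_nonneg 1 p) (pow_nonneg hx0 p)) _ summable_alph_one
  intro p
  have : x ^ p ≤ 1 := pow_le_one₀ hx0 hx1
  calc alph 1 p * x ^ p ≤ alph 1 p * 1 :=
        mul_le_mul_of_nonneg_left this (alph_nonneg 1 p)
    _ = alph 1 p := mul_one _

lemma stmt_one (x : ℝ) (hx : x ∈ Set.Icc (0:ℝ) 1) :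
    HasSum (fun p : ℕ => alph 1 p * x ^ p) (1 - Real.sqrt (1 - x)) := by
  obtain ⟨hx0, hx1⟩ := hx
  set a : ℕ → ℝ := fun p => alph 1 p * x ^ p with ha
  have hsum : Summable a := summable_alph_x x ⟨hx0, hx1⟩
  have hnorm : Summable (fun p => ‖a p‖) := by
    apply hsum.congr
    intro p
    rw [Real.norm_eq_abs,
      abs_of_nonneg (mul_nonneg (alph_nonneg 1 p) (pow_nonneg hx0 p))]
  set f : ℝ := ∑' p, a p with hf
  have hf0 : 0 ≤ f :=
    tsum_nonneg (fun p => mul_nonneg (alph_nonneg 1 p) (pow_nonneg hx0 p))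
  have hf1 : f ≤ 1 := by
    rw [← hasSum_alph_one_one.tsum_eq]
    apply Summable.tsum_le_tsum _ hsum summable_alph_one
    intro p
    calc a p ≤ alph 1 p * 1 :=
          mul_le_mul_of_nonneg_left (pow_le_one₀ hx0 hx1) (alph_nonneg 1 p)
      _ = alph 1 p := mul_one _
  have hcauchy : f * f = ∑' p, ∑ k ∈ range (p + 1), a k * a (p - k) :=
    tsum_mul_tsum_eq_tsum_sum_range_of_summable_norm hnorm hnorm
  have hconv : ∀ p, ∑ k ∈ range (p + 1), a k * a (p - k)
      = 2 * a p - (if p = 1 then (1:ℝ) else 0) * x ^ p := by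
    intro p
    have : ∑ k ∈ range (p + 1), a k * a (p - k)
        = (∑ k ∈ range (p + 1), alph 1 k * alph 1 (p - k)) * x ^ p := by
      rw [Finset.sum_mul]
      apply Finset.sum_congr rfl
      intro k hk
      simp only [Finset.mem_range] at hk
      simp only [ha]
      have hpk : x ^ k * x ^ (p - k) = x ^ p := by
        rw [← pow_add]
        congr 1
        omega
      rw [mul_mul_mul_comm, hpk]
    rw [this, conv_alph]
    simp only [ha]
    ring
  have hx_sum : HasSum (fun p : ℕ => (if p = 1 then (1:ℝ) else 0) * x ^ p) x := by
    have he : (fun p : ℕ => (if p = 1 then (1:ℝ) else 0) * x ^ p)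
        = fun p => if p = 1 then x else 0 := by
      funext p
      by_cases hp : p = 1 <;> simp [hp]
    rw [he]
    exact hasSum_ite_eq 1 x
  have h2f : HasSum (fun p => 2 * a p - (if p = 1 then (1:ℝ) else 0) * x ^ p) (2 * f - x) :=
    (hsum.hasSum.mul_left 2).sub hx_sum
  have hff : f * f = 2 * f - x := by rw [hcauchy, tsum_congr hconv, h2f.tsum_eq]
  have hsq : (1 - f) ^ 2 = 1 - x := by nlinarith [hff]
  have hsqrt : Real.sqrt (1 - x) = 1 - f := by
    rw [← hsq, Real.sqrt_sq (by linarith)]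
  have hfin : 1 - Real.sqrt (1 - x) = f := by rw [hsqrt]; ring
  rw [hfin]
  exact hsum.hasSum

lemma hasSum_delta (x : ℝ) :
    HasSum (fun p : ℕ => (if p = 1 then (1:ℝ) else 0) * x ^ p) x := by
  have he : (fun p : ℕ => (if p = 1 then (1:ℝ) else 0) * x ^ p)
      = fun p => if p = 1 then x else 0 := by
    funext p
    by_cases hp : p = 1 <;> simp [hp]
  rw [he]
  exact hasSum_ite_eq 1 x

lemma alph_ge (n p : ℕ) (hn : n ≠ 0) (hp : n ≤ p) :
    alph n p = ((n:ℝ) / (2 * p)) * ((2:ℝ) ^ (n + 1) / 4 ^ p)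
      * (Nat.choose (2 * p - n - 1) (p - 1) : ℝ) := by
  rw [alph, if_neg hn, if_neg (not_lt.mpr hp)]
  have hz : (2:ℝ) ^ ((n:ℤ) + 1 - 2 * (p:ℤ)) = (2:ℝ) ^ (n + 1) / 4 ^ p := by
    rw [show (n:ℤ) + 1 - 2 * (p:ℤ) = ((n:ℤ) + 1) - 2 * (p:ℤ) from rfl, two_zpow]
    norm_cast
  rw [hz]

lemma choose_cb (m : ℕ) : Nat.choose (2 * m + 2) (m + 1) = 2 * Nat.choose (2 * m + 1) (m + 1) := by
  rw [show 2 * m + 2 = (2 * m + 1) + 1 from rfl, Nat.choose_succ_succ]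
  have h := Nat.choose_symm (show m + 1 ≤ 2 * m + 1 by omega)
  rw [show 2 * m + 1 - (m + 1) = m from by omega] at h
  simp only [Nat.succ_eq_add_one] at *
  omega

lemma alph_two (p : ℕ) : alph 2 p = 2 * alph 1 p - (if p = 1 then 1 else 0) := by
  match p with
  | 0 => simp [alph]
  | 1 => simp [alph_lt 2 1 (by omega) (by omega), alph_one_one]
  | (m + 2) =>
    rw [if_neg (by omega : ¬ (m + 2 = 1)), sub_zero]
    rw [alph_ge 2 (m + 2) (by omega) (by omega), alph_ge 1 (m + 2) (by omega) (by omega)]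
    rw [show 2 * (m + 2) - 2 - 1 = 2 * m + 1 from by omega,
      show 2 * (m + 2) - 1 - 1 = 2 * m + 2 from by omega,
      show (m + 2) - 1 = m + 1 from by omega]
    have hc : ((2 * m + 2).choose (m + 1) : ℝ) = 2 * ((2 * m + 1).choose (m + 1) : ℝ) := by
      exact_mod_cast choose_cb m
    rw [hc]
    have hp : ((m:ℝ) + 2) ≠ 0 := by positivity
    have h4 : (4:ℝ) ^ (m + 2) ≠ 0 := by positivity
    push_cast
    field_simp

lemma stmt_two (x : ℝ) (hx : x ∈ Set.Icc (0:ℝ) 1) :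
    HasSum (fun p : ℕ => alph 2 p * x ^ p) ((1 - Real.sqrt (1 - x)) ^ 2) := by
  obtain ⟨hx0, hx1⟩ := hx
  have h1 := stmt_one x ⟨hx0, hx1⟩
  have h := (h1.mul_left 2).sub (hasSum_delta x)
  have he : (fun p : ℕ => 2 * (alph 1 p * x ^ p) - (if p = 1 then (1:ℝ) else 0) * x ^ p)
      = fun p => alph 2 p * x ^ p := by
    funext p
    rw [alph_two p]
    ring
  rw [he] at h
  have hs : Real.sqrt (1 - x) ^ 2 = 1 - x := Real.sq_sqrt (by linarith)
  have hv : 2 * (1 - Real.sqrt (1 - x)) - x = (1 - Real.sqrt (1 - x)) ^ 2 := by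
    linear_combination -hs
  rwa [hv] at h

lemma alph_rec (m p : ℕ) (hm : 2 ≤ m) :
    alph (m + 1) p = 2 * alph m p - alph (m - 1) (p - 1) := by
  rcases lt_trichotomy p m with hp | hp | hp
  · rw [alph_lt (m + 1) p (by omega) (by omega), alph_lt m p (by omega) hp,
      alph_lt (m - 1) (p - 1) (by omega) (by omega)]
    ring
  · subst hp
    rw [alph_lt (p + 1) p (by omega) (by omega), alph_diag p (by omega),
      alph_diag (p - 1) (by omega)]
    rw [show ((1:ℤ) - ((p - 1 : ℕ) : ℤ)) = (1 - (p:ℤ)) + 1 from by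
      push_cast [Nat.cast_sub (show 1 ≤ p by omega)]; ring]
    rw [zpow_add₀ (by norm_num : (2:ℝ) ≠ 0), zpow_one]
    ring
  · -- p ≥ m + 1
    have hp1 : 1 ≤ p := by omega
    rw [alph_ge (m + 1) p (by omega) (by omega), alph_ge m p (by omega) (by omega),
      alph_ge (m - 1) (p - 1) (by omega) (by omega)]
    rw [show 2 * p - (m + 1) - 1 = 2 * p - m - 2 from by omega,
      show 2 * (p - 1) - (m - 1) - 1 = 2 * p - m - 2 from by omega,
      show (p - 1) - 1 = p - 2 from by omega,
      show (m - 1) + 1 = m from by omega]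
    have hPascal : ((2 * p - m - 1).choose (p - 1) : ℝ)
        = ((2 * p - m - 2).choose (p - 2) : ℝ) + ((2 * p - m - 2).choose (p - 1) : ℝ) := by
      have : (2 * p - m - 1) = (2 * p - m - 2) + 1 := by omega
      rw [this, show p - 1 = (p - 2) + 1 from by omega, Nat.choose_succ_succ]
      push_cast
      try ring
    rw [hPascal]
    have hRatioN : (2 * p - m - 2).choose (p - 1) * (p - 1)
        = (2 * p - m - 2).choose (p - 2) * (p - m) := by
      have h := Nat.choose_succ_right_eq (2 * p - m - 2) (p - 2)
      rw [show (p - 2) + 1 = p - 1 from by omega,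
        show 2 * p - m - 2 - (p - 2) = p - m from by omega] at h
      exact h
    have hA : ((2 * p - m - 2).choose (p - 1) : ℝ) * ((p:ℝ) - 1)
        = ((2 * p - m - 2).choose (p - 2) : ℝ) * ((p:ℝ) - m) := by
      have := congrArg (fun t : ℕ => (t : ℝ)) hRatioN
      push_cast [Nat.cast_sub hp1, Nat.cast_sub (show m ≤ p by omega)] at this
      linarith [this]
    set A : ℝ := ((2 * p - m - 2).choose (p - 1) : ℝ)
    set B : ℝ := ((2 * p - m - 2).choose (p - 2) : ℝ)
    have hp0 : (p : ℝ) ≠ 0 := by positivity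
    have hpm1 : ((p:ℝ) - 1) ≠ 0 := by
      have : (2:ℝ) ≤ (p:ℝ) := by exact_mod_cast (show 2 ≤ p by omega)
      linarith
    have hcast1 : ((m - 1 : ℕ) : ℝ) = (m:ℝ) - 1 := by
      push_cast [Nat.cast_sub (show 1 ≤ m by omega)]; ring
    have hcast2 : ((p - 1 : ℕ) : ℝ) = (p:ℝ) - 1 := by
      push_cast [Nat.cast_sub hp1]; ring
    rw [hcast1, hcast2]
    have h4 : (4:ℝ) ^ p = 4 * 4 ^ (p - 1) := by
      rw [← pow_succ']
      congr 1
      omega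
    have h2m : (2:ℝ) ^ (m + 1 + 1) = 4 * 2 ^ m := by
      rw [pow_succ, pow_succ]; ring
    have h2m2 : (2:ℝ) ^ (m + 1) = 2 * 2 ^ m := by
      rw [pow_succ]; ring
    rw [h4, h2m, h2m2]
    have hv : (4:ℝ) ^ (p - 1) ≠ 0 := by positivity
    have hu : (2:ℝ) ^ m ≠ 0 := by positivity
    push_cast
    field_simp
    linear_combination 4 * hA

lemma hasSum_shift (k : ℕ) (hk : 1 ≤ k) (x S : ℝ)
    (h : HasSum (fun p : ℕ => alph k p * x ^ p) S) :
    HasSum (fun p : ℕ => alph k (p - 1) * x ^ p) (x * S) := by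
  have he : (fun p : ℕ => alph k p * x ^ p * x) = fun p => alph k p * x ^ (p + 1) := by
    funext p
    rw [pow_succ]
    ring
  have h2 : HasSum (fun p : ℕ => alph k p * x ^ (p + 1)) (S * x) := he ▸ h.mul_right x
  apply (hasSum_nat_add_iff' 1).mp
  have h0 : ∑ i ∈ range 1, (alph k (i - 1) * x ^ i) = 0 := by
    simp [alph_lt k 0 (by omega) (by omega)]
  rw [h0, sub_zero]
  simp only [Nat.add_sub_cancel]
  rw [mul_comm x S]
  exact h2

/-- For every `n ≥ 1` and `x ∈ [0,1]`, the series `Σ_p α_p^{(n)} x^p` converges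
and equals `(1 - √(1-x))^n`. -/
theorem stmt1 (n : ℕ) (hn : 1 ≤ n) (x : ℝ) (hx : x ∈ Set.Icc (0 : ℝ) 1) :
    HasSum (fun p : ℕ => alph n p * x ^ p) ((1 - Real.sqrt (1 - x)) ^ n) := by
  obtain ⟨hx0, hx1⟩ := hx
  induction n using Nat.strong_induction_on with
  | _ n ih =>
    match n, ih with
    | 1, _ => simpa using stmt_one x ⟨hx0, hx1⟩
    | 2, _ => exact stmt_two x ⟨hx0, hx1⟩
    | (m + 3), ih =>
      have h1 := ih (m + 2) (by omega) (by omega)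
      have h0 := ih (m + 1) (by omega) (by omega)
      have hshift := hasSum_shift (m + 1) (by omega) x _ h0
      have hcomb := (h1.mul_left 2).sub hshift
      set s : ℝ := Real.sqrt (1 - x) with hs
      have he : (fun p : ℕ => 2 * (alph (m + 2) p * x ^ p) - alph (m + 1) (p - 1) * x ^ p)
          = fun p : ℕ => alph (m + 3) p * x ^ p := by
        funext p
        have := alph_rec (m + 2) p (by omega)
        rw [show (m + 2) - 1 = m + 1 from by omega] at this
        rw [show m + 3 = (m + 2) + 1 from rfl, this]
        ring
      rw [he] at hcomb
      have hsq : s ^ 2 = 1 - x := Real.sq_sqrt (by linarith)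
      have hv : 2 * (1 - s) ^ (m + 2) - x * (1 - s) ^ (m + 1) = (1 - s) ^ (m + 3) := by
        have hbase : (1 - s) ^ 2 = 2 * (1 - s) - x := by linear_combination hsq
        calc 2 * (1 - s) ^ (m + 2) - x * (1 - s) ^ (m + 1)
            = (2 * (1 - s) - x) * (1 - s) ^ (m + 1) := by ring
          _ = (1 - s) ^ 2 * (1 - s) ^ (m + 1) := by rw [hbase]
          _ = (1 - s) ^ (m + 3) := by ring
      rwa [hv] at hcomb
end

section
/- Let E be an ordered Banach space, let d > 1 be an integer, and let {T_t}_{t ∈ ℝ_+^d} be a strongly continuous action of the additive semigroup ℝ_+^d by positive contractions on E. For a > 0 let Q_a = {t ∈ ℝ_+^d : t_i < a for all i} and define M_a(f) = (1/a^d) ∫_{Q_a} T_t f dt; set M₁(f) = ∫_{[0,1)^d} T_t f dt and S_i = T_{e_i}. Then for every real a ≥ 1, with n = ⌊a⌋, and every f ∈ E with f ≥ 0, one has M_a(f) ≤ (1/n^d) Σ_{0 ≤ j_1 < n+1} ⋯ Σ_{0 ≤ j_d < n+1} S_1^{j_1} ⋯ S_d^{j_d} M₁(f). -/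
open MeasureTheory

/-- Let `E` be an ordered Banach space with cone `K`, `d > 1`, and `{T_t}_{t ∈ ℝ_+^d}`
a strongly continuous action of `ℝ_+^d` by positive contractions on `E`.  With
`M_a(f) = (1/a^d) ∫_{[0,a)^d} T_t f dt`, `M₁(f) = ∫_{[0,1)^d} T_t f dt` and
`S_i = T_{e_i}`, for every `a ≥ 1`, `n = ⌊a⌋`, and every `f ∈ K`,
`M_a(f) ≤ (1/n^d) Σ_{0 ≤ j₁,…,j_d < n+1} S_1^{j₁} ⋯ S_d^{j_d} (M₁ f)`
(the inequality meaning the difference lies in the cone `K`). -/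
theorem stmt6 (E : Type*) [NormedAddCommGroup E] [NormedSpace ℝ E] [CompleteSpace E]
    (K : Set E) (hK_closed : IsClosed K) (hK_convex : Convex ℝ K)
    (hK_pointed : K ∩ (-K) = {0}) (hK_cone : ∀ c : ℝ, 0 ≤ c → ∀ x ∈ K, c • x ∈ K)
    (d : ℕ) (hd : 1 < d)
    (T : (Fin d → ℝ) → (E →L[ℝ] E))
    (hT_id : T 0 = 1)
    (hT_semigroup : ∀ s t : Fin d → ℝ, 0 ≤ s → 0 ≤ t → T s * T t = T (s + t))
    (hT_norm : ∀ t : Fin d → ℝ, 0 ≤ t → ‖T t‖ ≤ 1)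
    (hT_pos : ∀ t : Fin d → ℝ, 0 ≤ t → ∀ x ∈ K, T t x ∈ K)
    (hT_cont : ∀ f : E, ContinuousOn (fun t => T t f) {t : Fin d → ℝ | 0 ≤ t}) :
    ∀ a : ℝ, 1 ≤ a → ∀ f ∈ K,
      ((1 / (Nat.floor a : ℝ) ^ d) •
          ∑ j ∈ Fintype.piFinset (fun _ : Fin d => Finset.range (Nat.floor a + 1)),
            ((List.ofFn fun i => (T (Pi.single i 1)) ^ (j i)).prod)
              (∫ t in Set.univ.pi (fun _ : Fin d => Set.Ico (0 : ℝ) 1), T t f))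
        - (1 / a ^ d) • (∫ t in Set.univ.pi (fun _ : Fin d => Set.Ico (0 : ℝ) a), T t f)
        ∈ K := by
  intro a ha f hf
  classical
  -- basic cone facts
  have h0K : (0:E) ∈ K := by
    have h : (0:E) ∈ K ∩ (-K) := by rw [hK_pointed]; rfl
    exact h.1
  have haddK : ∀ x ∈ K, ∀ y ∈ K, x + y ∈ K := by
    intro x hx y hy
    have h2 : ((1:ℝ)/2) • x + ((1:ℝ)/2) • y ∈ K :=
      hK_convex hx hy (by norm_num) (by norm_num) (by norm_num)
    have h3 := hK_cone 2 (by norm_num) _ h2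
    convert h3 using 1
    rw [smul_add, smul_smul, smul_smul]; norm_num
  set n := Nat.floor a with hn
  have hn1 : 1 ≤ n := Nat.le_floor (by exact_mod_cast ha)
  have hnpos : (0:ℝ) < n := by exact_mod_cast hn1
  have hna : (n:ℝ) ≤ a := Nat.floor_le (le_trans zero_le_one ha)
  have haN : a < (n:ℝ) + 1 := Nat.lt_floor_add_one a
  -- extension of the orbit map
  set g : (Fin d → ℝ) → E := fun t => T (fun i => max (t i) 0) f with hg
  have hmaxnn : ∀ t : Fin d → ℝ, (0 : Fin d → ℝ) ≤ fun i => max (t i) 0 :=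
    fun t i => le_max_right _ _
  have hgeq : ∀ t : Fin d → ℝ, 0 ≤ t → g t = T t f := by
    intro t ht
    have he : (fun i => max (t i) 0) = t := funext fun i => max_eq_left (ht i)
    simp only [hg, he]
  have hgK : ∀ t, g t ∈ K := fun t => hT_pos _ (hmaxnn t) f hf
  have hgbdd : ∀ t, ‖g t‖ ≤ ‖f‖ := by
    intro t
    calc ‖g t‖ ≤ ‖T (fun i => max (t i) 0)‖ * ‖f‖ := ContinuousLinearMap.le_opNorm _ _
      _ ≤ 1 * ‖f‖ := by
          exact mul_le_mul_of_nonneg_right (hT_norm _ (hmaxnn t)) (norm_nonneg f)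
      _ = ‖f‖ := one_mul _
  have hgcont : Continuous g := by
    have hc : Continuous fun t : Fin d → ℝ => (fun i => max (t i) 0) :=
      continuous_pi fun i => (continuous_apply i).max continuous_const
    exact (hT_cont f).comp_continuous hc (fun t => hmaxnn t)
  -- integrability
  have hInt : ∀ s : Set (Fin d → ℝ), volume s ≠ ⊤ → IntegrableOn g s := by
    intro s hs
    exact Measure.integrableOn_of_bounded hs hgcont.aestronglyMeasurable
      (Filter.Eventually.of_forall fun t => hgbdd t)
  have hvol : ∀ u v : Fin d → ℝ,
      volume (Set.univ.pi fun i => Set.Ico (u i) (v i)) ≠ ⊤ := by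
    intro u v
    rw [volume_pi_pi]
    exact (ENNReal.prod_lt_top fun i _ => by simp [Real.volume_Ico]).ne
  have hmeas : ∀ u v : Fin d → ℝ,
      MeasurableSet (Set.univ.pi fun i => Set.Ico (u i) (v i)) :=
    fun u v => MeasurableSet.univ_pi fun i => measurableSet_Ico
  -- integrals of K-valued maps lie in K
  have hintK : ∀ s : Set (Fin d → ℝ), MeasurableSet s → volume s ≠ ⊤ →
      (∫ t in s, g t) ∈ K := by
    intro s hms hvs
    by_cases h0 : volume s = 0
    · rw [Measure.restrict_eq_zero.mpr h0, integral_zero_measure]; exact h0K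
    · have havg : (⨍ t in s, g t) ∈ K :=
        hK_convex.set_average_mem hK_closed h0 hvs
          (Filter.Eventually.of_forall fun t => hgK t) (hInt s hvs)
      have he : ∫ t in s, g t = (volume s).toReal • ⨍ t in s, g t := by
        rw [setAverage_eq, measureReal_def, smul_smul, mul_inv_cancel₀
          (ENNReal.toReal_ne_zero.mpr ⟨h0, hvs⟩), one_smul]
      rw [he]
      exact hK_cone _ ENNReal.toReal_nonneg _ havg
  -- nonnegativity of single vectors
  have hsingle_nn : ∀ (i : Fin d) (c : ℝ), 0 ≤ c → (0 : Fin d → ℝ) ≤ Pi.single i c := by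
    intro i c hc i'
    rcases eq_or_ne i' i with rfl | h
    · simpa using hc
    · simp [Pi.single_eq_of_ne h]
  -- powers of the coordinate shifts
  have hpow : ∀ (i : Fin d) (k : ℕ), (T (Pi.single i 1)) ^ k = T (Pi.single i (k:ℝ)) := by
    intro i k
    induction k with
    | zero => simp [hT_id]
    | succ k ih =>
      rw [pow_succ, ih, hT_semigroup _ _ (hsingle_nn i k (Nat.cast_nonneg k))
        (hsingle_nn i 1 zero_le_one), ← Pi.single_add]
      norm_num
  -- products of semigroup elements
  have hlist : ∀ l : List (Fin d → ℝ), (∀ v ∈ l, 0 ≤ v) → (l.map T).prod = T l.sum := by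
    intro l
    induction l with
    | nil => intro _; simpa using hT_id.symm
    | cons v l ih =>
      intro hv
      have hl : ∀ w ∈ l, 0 ≤ w := fun w hw => hv w (List.mem_cons_of_mem _ hw)
      have hsum : 0 ≤ l.sum := List.sum_nonneg hl
      rw [List.map_cons, List.prod_cons, ih hl,
        hT_semigroup _ _ (hv v List.mem_cons_self) hsum, List.sum_cons]
  have hprodT : ∀ j : Fin d → ℕ, (List.ofFn fun i => (T (Pi.single i 1)) ^ (j i)).prod
      = T (fun i => (j i : ℝ)) := by
    intro j
    have he : (List.ofFn fun i => (T (Pi.single i 1)) ^ (j i))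
        = (List.ofFn fun i => Pi.single i ((j i : ℝ))).map T := by
      rw [List.map_ofFn]
      congr 1
      funext i
      exact hpow i (j i)
    rw [he, hlist _ ?_, List.sum_ofFn, Finset.univ_sum_single]
    intro v hv
    simp only [List.mem_ofFn] at hv
    obtain ⟨i, rfl⟩ := hv
    exact hsingle_nn i _ (Nat.cast_nonneg _)
  -- the unit cube integral
  set M1 : E := ∫ t in Set.univ.pi fun _ : Fin d => Set.Ico (0:ℝ) 1, g t with hM1
  have hM1cube : (Set.univ.pi fun _ : Fin d => Set.Ico (0:ℝ) 1)
      = Set.univ.pi fun i : Fin d => Set.Ico ((0:Fin d → ℝ) i) ((0:Fin d → ℝ) i + 1) := by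
    simp
  -- translation identity
  have htrans : ∀ c : Fin d → ℝ, 0 ≤ c →
      (∫ t in Set.univ.pi fun i : Fin d => Set.Ico (c i) (c i + 1), g t) = T c M1 := by
    intro c hc
    have himg : (fun t => c + t) '' (Set.univ.pi fun _ : Fin d => Set.Ico (0:ℝ) 1)
        = Set.univ.pi fun i : Fin d => Set.Ico (c i) (c i + 1) := by
      ext x
      simp only [Set.mem_image, Set.mem_pi, Set.mem_univ, forall_true_left, Set.mem_Ico]
      constructor
      · rintro ⟨t, ht, rfl⟩ i
        have := ht i
        constructor
        · simpa using this.1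
        · have : t i < 1 := this.2
          simp only [Pi.add_apply]
          linarith
      · intro hx
        refine ⟨x - c, fun i => ?_, by abel⟩
        have := hx i
        simp only [Pi.sub_apply]
        constructor <;> [linarith [this.1]; linarith [this.2]]
    rw [← himg, (measurePreserving_add_left volume c).setIntegral_image_emb
        (measurableEmbedding_addLeft c) g _]
    have heq : ∀ t ∈ (Set.univ.pi fun _ : Fin d => Set.Ico (0:ℝ) 1),
        g (c + t) = T c (g t) := by
      intro t ht
      have ht0 : (0:Fin d → ℝ) ≤ t := fun i => (ht i (Set.mem_univ i)).1
      have hct : (0:Fin d → ℝ) ≤ c + t := fun i => add_nonneg (hc i) (ht0 i)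
      calc g (c + t) = T (c + t) f := hgeq _ hct
        _ = (T c * T t) f := by rw [hT_semigroup c t hc ht0]
        _ = T c (T t f) := rfl
        _ = T c (g t) := by rw [hgeq t ht0]
    rw [setIntegral_congr_fun (by simpa using hmeas 0 1) heq]
    exact ContinuousLinearMap.integral_comp_comm (T c) (hInt _ (by simpa using hvol 0 1))
  -- decomposition of the big cube
  set B : Set (Fin d → ℝ) := Set.univ.pi fun _ : Fin d => Set.Ico (0:ℝ) ((n:ℝ)+1) with hB
  set piece : (Fin d → ℕ) → Set (Fin d → ℝ) :=
    fun j => Set.univ.pi fun i => Set.Ico ((j i : ℝ)) ((j i : ℝ)+1) with hpiece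
  have hU : B = ⋃ j ∈ Fintype.piFinset (fun _ : Fin d => Finset.range (n+1)), piece j := by
    ext t
    simp only [hB, hpiece, Set.mem_pi, Set.mem_univ, forall_true_left, Set.mem_Ico,
      Set.mem_iUnion, Fintype.mem_piFinset, Finset.mem_range, exists_prop]
    constructor
    · intro ht
      refine ⟨fun i => (⌊t i⌋).toNat, fun i => ?_, fun i => ?_⟩
      · have h0 : 0 ≤ ⌊t i⌋ := Int.floor_nonneg.mpr (ht i).1
        have h1 : ⌊t i⌋ < (n:ℤ)+1 := by
          rw [Int.floor_lt]
          push_cast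
          exact (ht i).2
        show (⌊t i⌋).toNat < n + 1
        omega
      · have h0 : 0 ≤ ⌊t i⌋ := Int.floor_nonneg.mpr (ht i).1
        have hc : (((⌊t i⌋).toNat : ℕ) : ℝ) = ((⌊t i⌋ : ℤ) : ℝ) := by
          exact_mod_cast Int.toNat_of_nonneg h0
        constructor
        · rw [hc]; exact Int.floor_le (t i)
        · rw [hc]; exact Int.lt_floor_add_one (t i)
    · rintro ⟨j, hj, hjt⟩ i
      have h := hjt i
      constructor
      · exact le_trans (Nat.cast_nonneg _) h.1
      · have hji : (j i : ℝ) ≤ (n:ℝ) := by exact_mod_cast Nat.lt_succ_iff.mp (hj i)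
        linarith [h.2]
  have hdisj : (↑(Fintype.piFinset fun _ : Fin d => Finset.range (n+1)) :
      Set (Fin d → ℕ)).Pairwise (Function.onFun Disjoint piece) := by
    intro j _ j' _ hne
    simp only [Function.onFun]
    rw [Set.disjoint_left]
    intro t htj htj'
    apply hne
    funext i
    have h1 := htj i (Set.mem_univ i)
    have h2 := htj' i (Set.mem_univ i)
    simp only [Set.mem_Ico] at h1 h2
    have a1 : (j i : ℝ) < (j' i : ℝ) + 1 := lt_of_le_of_lt h1.1 h2.2
    have a2 : (j' i : ℝ) < (j i : ℝ) + 1 := lt_of_le_of_lt h2.1 h1.2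
    have b1 : j i < j' i + 1 := by exact_mod_cast a1
    have b2 : j' i < j i + 1 := by exact_mod_cast a2
    omega
  have hBsum : (∫ t in B, g t)
      = ∑ j ∈ Fintype.piFinset (fun _ : Fin d => Finset.range (n+1)),
          T (fun i => (j i : ℝ)) M1 := by
    rw [hU, integral_biUnion_finset _ (fun j _ => hmeas _ _) hdisj
      (fun j _ => hInt _ (hvol _ _))]
    exact Finset.sum_congr rfl fun j _ => htrans _ (fun i => Nat.cast_nonneg _)
  -- rewrite the goal integrals in terms of g
  have e1 : (∫ t in Set.univ.pi fun _ : Fin d => Set.Ico (0:ℝ) 1, T t f) = M1 := by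
    rw [hM1]
    refine setIntegral_congr_fun (by simpa using hmeas 0 1) fun t ht => ?_
    exact (hgeq t fun i => (ht i (Set.mem_univ i)).1).symm
  have e2 : (∫ t in Set.univ.pi fun _ : Fin d => Set.Ico (0:ℝ) a, T t f)
      = ∫ t in Set.univ.pi fun _ : Fin d => Set.Ico (0:ℝ) a, g t := by
    refine setIntegral_congr_fun (by simpa using hmeas 0 (fun _ => a)) fun t ht => ?_
    exact (hgeq t fun i => (ht i (Set.mem_univ i)).1).symm
  rw [e1, e2]
  have hsumeq : ∑ j ∈ Fintype.piFinset (fun _ : Fin d => Finset.range (n+1)),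
      ((List.ofFn fun i => (T (Pi.single i 1)) ^ (j i)).prod) M1 = ∫ t in B, g t := by
    rw [hBsum]
    exact Finset.sum_congr rfl fun j _ => by rw [hprodT j]
  rw [hsumeq]
  -- final algebra
  set Ia : E := ∫ t in Set.univ.pi fun _ : Fin d => Set.Ico (0:ℝ) a, g t with hIa
  set IB : E := ∫ t in B, g t with hIB
  have hsub : (Set.univ.pi fun _ : Fin d => Set.Ico (0:ℝ) a) ⊆ B := by
    refine Set.pi_mono fun i _ => ?_
    exact Set.Ico_subset_Ico_right (le_of_lt haN)
  have hdiffK : IB - Ia ∈ K := by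
    have hd : IB - Ia = ∫ t in B \ (Set.univ.pi fun _ : Fin d => Set.Ico (0:ℝ) a), g t := by
      rw [integral_diff (by simpa using hmeas 0 (fun _ => a))
        (hInt B (by simpa [hB] using hvol 0 (fun _ => (n:ℝ)+1))) hsub]
    rw [hd]
    refine hintK _ (MeasurableSet.diff (by simpa [hB] using hmeas 0 (fun _ => (n:ℝ)+1))
      (by simpa using hmeas 0 (fun _ => a))) ?_
    exact (lt_of_le_of_lt (measure_mono Set.diff_subset)
      (lt_top_iff_ne_top.mpr (by simpa [hB] using hvol 0 (fun _ => (n:ℝ)+1)))).ne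
  have hIaK : Ia ∈ K := hintK _ (by simpa using hmeas 0 (fun _ => a))
    (by simpa using hvol 0 (fun _ => a))
  have hscal : (0:ℝ) ≤ 1/(n:ℝ)^d - 1/a^d := by
    have h1 : (n:ℝ)^d ≤ a^d := pow_le_pow_left₀ (le_of_lt hnpos) hna d
    have h2 : (0:ℝ) < (n:ℝ)^d := pow_pos hnpos d
    have := one_div_le_one_div_of_le h2 h1
    linarith
  have key : (1/(n:ℝ)^d) • IB - (1/a^d) • Ia
      = (1/(n:ℝ)^d) • (IB - Ia) + ((1/(n:ℝ)^d) - 1/a^d) • Ia := by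
    module
  rw [key]
  exact haddK _ (hK_cone _ (by positivity) _ hdiffK) _ (hK_cone _ hscal _ hIaK)
end

section
/- Let E be an ordered Banach space and let {κ_n}_{n=0}^∞ be a sequence of positive bounded linear operators on E satisfying κ_0 = id and κ_1 ∘ κ_n = w κ_{n+1} + (1 − w) κ_{n−1} for all n ≥ 1, where 1/2 < w < 1 is fixed. Then for every n ∈ ℕ there exist real coefficients a_n(0), …, a_n(n) with 0 ≤ a_n(l) ≤ 1 and Σ_{l=0}^{n} a_n(l) = 1 such that the composition power κ_1^n equals the convex combination Σ_{l=0}^{n} a_n(l) κ_l. -/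
/-- Let `E` be an ordered Banach space (cone `K`) and `{κ_n}` a sequence of
positive bounded operators on `E` with `κ_0 = id` and
`κ_1 ∘ κ_n = w κ_{n+1} + (1-w) κ_{n-1}` for `n ≥ 1`, where `1/2 < w < 1`.
Then for every `n` the composition power `κ_1^n` is a convex combination
`Σ_{l=0}^{n} a_n(l) κ_l` with `0 ≤ a_n(l) ≤ 1` and `Σ_{l=0}^{n} a_n(l) = 1`. -/
theorem stmt9 (E : Type*) [NormedAddCommGroup E] [NormedSpace ℝ E] [CompleteSpace E]
    (K : Set E) (hK_closed : IsClosed K) (hK_convex : Convex ℝ K)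
    (hK_pointed : K ∩ (-K) = {0}) (hK_cone : ∀ c : ℝ, 0 ≤ c → ∀ x ∈ K, c • x ∈ K)
    (w : ℝ) (hw₁ : 1 / 2 < w) (hw₂ : w < 1)
    (κ : ℕ → (E →L[ℝ] E))
    (hκ₀ : κ 0 = 1)
    (hκ_pos : ∀ n : ℕ, ∀ x ∈ K, κ n x ∈ K)
    (hκ_rec : ∀ n : ℕ, 1 ≤ n → κ 1 * κ n = w • κ (n + 1) + (1 - w) • κ (n - 1)) :
    ∀ n : ℕ, ∃ a : ℕ → ℝ,
      (∀ l ≤ n, 0 ≤ a l ∧ a l ≤ 1) ∧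
      (∑ l ∈ Finset.range (n + 1), a l) = 1 ∧
      (κ 1) ^ n = ∑ l ∈ Finset.range (n + 1), a l • κ l := by
  have hw0 : (0:ℝ) < w := by linarith
  have hw1' : (0:ℝ) < 1 - w := by linarith
  intro n
  induction n with
  | zero =>
    refine ⟨fun l => if l = 0 then 1 else 0, ?_, ?_, ?_⟩
    · intro l hl; interval_cases l <;> norm_num
    · simp
    · simp [hκ₀]
  | succ n ih =>
    obtain ⟨a, ha01, hsum, heq⟩ := ih
    set b : ℕ → ℝ := fun l => if l ≤ n then a l else 0 with hb
    have hb0 : ∀ l, 0 ≤ b l := by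
      intro l; simp only [hb]
      split
      · exact (ha01 l ‹_›).1
      · exact le_refl 0
    have hbz : ∀ l, n < l → b l = 0 := by
      intro l hl; simp only [hb]; rw [if_neg (by omega)]
    have hbsum : ∑ l ∈ Finset.range (n + 1), b l = 1 := by
      rw [← hsum]
      refine Finset.sum_congr rfl fun l hl => ?_
      simp only [hb]
      rw [if_pos (Nat.lt_succ_iff.mp (Finset.mem_range.mp hl))]
    have hbeq : (κ 1) ^ n = ∑ l ∈ Finset.range (n + 1), b l • κ l := by
      rw [heq]
      refine Finset.sum_congr rfl fun l hl => ?_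
      simp only [hb]
      rw [if_pos (Nat.lt_succ_iff.mp (Finset.mem_range.mp hl))]
    set a' : ℕ → ℝ := fun l =>
      (1 - w) * b (l + 1) + (if l = 1 then b 0 else 0) +
        (if 2 ≤ l then w * b (l - 1) else 0) with ha'
    have hS : ∑ i ∈ Finset.range n, b (i + 1) = 1 - b 0 := by
      have h := Finset.sum_range_succ' b n
      rw [hbsum] at h
      linarith
    have hsum' : ∑ l ∈ Finset.range (n + 2), a' l = 1 := by
      simp only [ha', Finset.sum_add_distrib]
      have h1 : ∑ l ∈ Finset.range (n + 2), (1 - w) * b (l + 1) = (1 - w) * (1 - b 0) := by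
        rw [← Finset.mul_sum]
        rw [Finset.sum_range_succ, Finset.sum_range_succ, hS,
          hbz (n + 1) (by omega), hbz (n + 2) (by omega)]
        ring
      have h2 : ∑ l ∈ Finset.range (n + 2), (if l = 1 then b 0 else 0) = b 0 := by
        rw [Finset.sum_ite_eq' (Finset.range (n + 2)) 1 (fun _ => b 0)]
        rw [if_pos (Finset.mem_range.mpr (by omega))]
      have h3 : ∑ l ∈ Finset.range (n + 2), (if 2 ≤ l then w * b (l - 1) else 0)
          = w * (1 - b 0) := by
        rw [Finset.sum_range_succ' (fun l => if 2 ≤ l then w * b (l - 1) else 0) (n + 1),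
          Finset.sum_range_succ' (fun l => if 2 ≤ l + 1 then w * b (l + 1 - 1) else 0) n]
        simp only [show ¬ (2:ℕ) ≤ 0 by omega, show ¬ (2:ℕ) ≤ 0 + 1 by omega, if_false]
        have : ∀ i, (if 2 ≤ i + 1 + 1 then w * b (i + 1 + 1 - 1) else 0) = w * b (i + 1) := by
          intro i; rw [if_pos (by omega)]; norm_num
        rw [Finset.sum_congr rfl fun i _ => this i, ← Finset.mul_sum, hS]
        ring
      rw [h1, h2, h3]; ring
    refine ⟨a', ?_, hsum', ?_⟩
    · intro l hl
      have hnn : ∀ m, 0 ≤ a' m := by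
        intro m
        simp only [ha']
        have t1 : 0 ≤ (1 - w) * b (m + 1) := mul_nonneg (le_of_lt hw1') (hb0 _)
        have t2 : (0:ℝ) ≤ if m = 1 then b 0 else 0 := by
          split; exacts [hb0 0, le_refl 0]
        have t3 : (0:ℝ) ≤ if 2 ≤ m then w * b (m - 1) else 0 := by
          split; exacts [mul_nonneg (le_of_lt hw0) (hb0 _), le_refl 0]
        linarith
      refine ⟨hnn l, ?_⟩
      calc a' l ≤ ∑ m ∈ Finset.range (n + 2), a' m :=
            Finset.single_le_sum (fun m _ => hnn m) (Finset.mem_range.mpr (by omega))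
        _ = 1 := hsum'
    · -- operator identity
      have lhs : (κ 1) ^ (n + 1)
          = b 0 • κ 1 + ∑ l ∈ Finset.range n,
              ((w * b (l + 1)) • κ (l + 2) + ((1 - w) * b (l + 1)) • κ l) := by
        rw [pow_succ', hbeq, Finset.mul_sum]
        have hterm : ∀ l, κ 1 * (b l • κ l) = b l • (κ 1 * κ l) := fun l =>
          mul_smul_comm _ _ _
        rw [Finset.sum_congr rfl fun l _ => hterm l,
          Finset.sum_range_succ' (fun l => b l • (κ 1 * κ l)) n]
        have h0 : b 0 • (κ 1 * κ 0) = b 0 • κ 1 := by rw [hκ₀, mul_one]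
        have hstep : ∀ i, b (i + 1) • (κ 1 * κ (i + 1))
            = (w * b (i + 1)) • κ (i + 2) + ((1 - w) * b (i + 1)) • κ i := by
          intro i
          rw [hκ_rec (i + 1) (by omega)]
          simp only [Nat.add_sub_cancel]
          rw [smul_add, smul_smul, smul_smul]
          ring_nf
        rw [h0, Finset.sum_congr rfl fun i _ => hstep i]
        abel
      rw [lhs]
      have rhs : ∑ l ∈ Finset.range (n + 2), a' l • κ l
          = (∑ l ∈ Finset.range (n + 2), ((1 - w) * b (l + 1)) • κ l)
            + (∑ l ∈ Finset.range (n + 2), (if l = 1 then b 0 else 0) • κ l)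
            + (∑ l ∈ Finset.range (n + 2), (if 2 ≤ l then w * b (l - 1) else 0) • κ l) := by
        rw [← Finset.sum_add_distrib, ← Finset.sum_add_distrib]
        refine Finset.sum_congr rfl fun l _ => ?_
        simp only [ha', add_smul]
      rw [rhs]
      have h1 : ∑ l ∈ Finset.range (n + 2), ((1 - w) * b (l + 1)) • κ l
          = ∑ l ∈ Finset.range n, ((1 - w) * b (l + 1)) • κ l := by
        rw [Finset.sum_range_succ, Finset.sum_range_succ,
          hbz (n + 1) (by omega), hbz (n + 2) (by omega)]
        simp
      have h2 : ∑ l ∈ Finset.range (n + 2), (if l = 1 then b 0 else 0) • κ l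
          = b 0 • κ 1 := by
        have : ∀ l, (if l = 1 then b 0 else 0) • κ l
            = if l = 1 then b 0 • κ l else 0 := by
          intro l; split <;> simp
        rw [Finset.sum_congr rfl fun l _ => this l,
          Finset.sum_ite_eq' (Finset.range (n + 2)) 1 (fun l => b 0 • κ l),
          if_pos (Finset.mem_range.mpr (by omega))]
      have h3 : ∑ l ∈ Finset.range (n + 2), (if 2 ≤ l then w * b (l - 1) else 0) • κ l
          = ∑ l ∈ Finset.range n, (w * b (l + 1)) • κ (l + 2) := by
        rw [Finset.sum_range_succ' (fun l => (if 2 ≤ l then w * b (l - 1) else 0) • κ l) (n + 1),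
          Finset.sum_range_succ'
            (fun l => (if 2 ≤ l + 1 then w * b (l + 1 - 1) else 0) • κ (l + 1)) n]
        simp only [show ¬ (2:ℕ) ≤ 0 by omega, show ¬ (2:ℕ) ≤ 0 + 1 by omega, if_false,
          zero_smul, add_zero]
        refine Finset.sum_congr rfl fun i _ => ?_
        rw [if_pos (by omega : 2 ≤ i + 1 + 1)]; norm_num
      rw [h1, h2, h3, Finset.sum_add_distrib]
      abel
end

section
/- Let X be a normed vector space and let {σ_n}_{n=0}^∞ be a sequence of pairwise commuting bounded linear operators on X with σ_0 = id and ‖σ_n‖ ≤ 1 for all n, satisfying σ_1 ∘ σ_n = w σ_{n+1} + (1 − w) σ_{n−1} for all n ≥ 1, where 1/2 < w < 1 is fixed. Define S_n = (1/(n+1)) Σ_{l=0}^{n} σ_l. Then for every fixed k ∈ ℤ_+, the operator norms ‖S_n ∘ (id − σ_k)‖ converge to 0 as n → ∞; equivalently, lim_{n→∞} sup_{‖y‖ ≤ 1} ‖S_n(y − σ_k(y))‖ = 0. -/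
/-- Let `X` be a normed vector space over `ℝ` or `ℂ` (a field `𝕜` satisfying
`RCLike 𝕜`), and `{σ_n}` pairwise commuting bounded operators on `X`, each of
operator norm at most `1`, with `σ_0 = id` and
`σ_1 ∘ σ_n = w σ_{n+1} + (1-w) σ_{n-1}` for `n ≥ 1`, where `1/2 < w < 1`.  With
`S_n = (1/(n+1)) Σ_{l=0}^n σ_l`, for every fixed `k ∈ ℤ_+` the operator norms
`‖S_n ∘ (id − σ_k)‖` converge to `0` as `n → ∞`. -/
theorem stmt11 (𝕜 : Type*) [RCLike 𝕜] (X : Type*) [NormedAddCommGroup X]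
    [NormedSpace 𝕜 X]
    (σ : ℕ → (X →L[𝕜] X)) (hcomm : ∀ m n : ℕ, Commute (σ m) (σ n)) (hσ₀ : σ 0 = 1)
    (hσ_norm : ∀ n : ℕ, ‖σ n‖ ≤ 1)
    (w : ℝ) (hw₁ : 1 / 2 < w) (hw₂ : w < 1)
    (hrec : ∀ n : ℕ, 1 ≤ n →
      σ 1 * σ n = (w : 𝕜) • σ (n + 1) + ((1 - w : ℝ) : 𝕜) • σ (n - 1))
    (S : ℕ → (X →L[𝕜] X))
    (hS : ∀ n : ℕ, S n = ((((n : ℝ) + 1) : ℝ) : 𝕜)⁻¹ • ∑ l ∈ Finset.range (n + 1), σ l) :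
    ∀ k : ℕ,
      Filter.Tendsto (fun n : ℕ => ‖(S n).comp (1 - σ k)‖) Filter.atTop (nhds 0) := by
  set A : ℕ → (X →L[𝕜] X) := fun n => ∑ l ∈ Finset.range (n + 1), σ l with hA
  have hAcomm : ∀ n m : ℕ, Commute (A n) (σ m) := fun n m =>
    Commute.sum_left _ _ _ fun i _ => hcomm i m
  have hw0 : (0 : ℝ) < w := by linarith
  have hw1' : (0 : ℝ) ≤ 1 - w := by linarith
  have hnw : ‖((w : ℝ) : 𝕜)‖ = w := by rw [RCLike.norm_ofReal, abs_of_pos hw0]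
  have hnw' : ‖((1 - w : ℝ) : 𝕜)‖ = 1 - w := by
    rw [RCLike.norm_ofReal, abs_of_nonneg hw1']
  have hone : ‖(1 : X →L[𝕜] X)‖ ≤ 1 := by
    rw [ContinuousLinearMap.one_def]; exact ContinuousLinearMap.norm_id_le
  have hsm : ∀ (c : ℝ) (m : ℕ), 0 ≤ c → ‖((c : ℝ) : 𝕜) • σ m‖ ≤ c := by
    intro c m hc
    rw [norm_smul ((c : ℝ) : 𝕜) (σ m), RCLike.norm_ofReal, abs_of_nonneg hc]
    calc c * ‖σ m‖ ≤ c * 1 := mul_le_mul_of_nonneg_left (hσ_norm m) hc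
      _ = c := mul_one c
  -- closed formula for `A n * (1 - σ 1)` when `1 ≤ n`
  have hform : ∀ n : ℕ, 1 ≤ n → A n * (1 - σ 1) =
      (w : 𝕜) • σ 0 + (w : 𝕜) • σ 1 - σ 1 - (w : 𝕜) • σ (n + 1)
        + ((1 - w : ℝ) : 𝕜) • σ n := by
    intro n hn
    induction n, hn using Nat.le_induction with
    | base =>
        have h2 : A 1 = σ 0 + σ 1 := by
          simp [hA, Finset.sum_range_succ]
        have hr := hrec 1 le_rfl
        simp only [Nat.sub_self] at hr
        rw [h2, hσ₀] at *
        rw [add_mul, one_mul, mul_sub, mul_one, hr]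
        simp only [RCLike.ofReal_sub, RCLike.ofReal_one]
        module
    | succ n hn ih =>
        have h2 : A (n + 1) = A n + σ (n + 1) := Finset.sum_range_succ _ _
        have hr := hrec (n + 1) (by omega)
        simp only [Nat.add_sub_cancel] at hr
        have hc : σ (n + 1) * σ 1 = σ 1 * σ (n + 1) := ((hcomm 1 (n + 1)).symm).eq
        rw [h2, add_mul, ih, mul_sub, mul_one, hc, hr]
        simp only [RCLike.ofReal_sub, RCLike.ofReal_one]
        module
  -- uniform bound for k = 1
  have h1 : ∀ n : ℕ, ‖A n * (1 - σ 1)‖ ≤ 5 := by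
    intro n
    rcases Nat.eq_zero_or_pos n with h0 | h0
    · subst h0
      have h2 : A 0 = 1 := by simp [hA, hσ₀]
      rw [h2, one_mul]
      have := norm_sub_le (1 : X →L[𝕜] X) (σ 1)
      have := hσ_norm 1
      linarith
    · rw [hform n h0]
      have e1 := hsm w 0 hw0.le
      have e2 := hsm w 1 hw0.le
      have e3 := hσ_norm 1
      have e4 := hsm w (n + 1) hw0.le
      have e5 := hsm (1 - w) n hw1'
      have t1 := norm_add_le ((w : 𝕜) • σ 0) ((w : 𝕜) • σ 1)
      have t2 := norm_sub_le ((w : 𝕜) • σ 0 + (w : 𝕜) • σ 1) (σ 1)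
      have t3 := norm_sub_le ((w : 𝕜) • σ 0 + (w : 𝕜) • σ 1 - σ 1) ((w : 𝕜) • σ (n + 1))
      have t4 := norm_add_le ((w : 𝕜) • σ 0 + (w : 𝕜) • σ 1 - σ 1 - (w : 𝕜) • σ (n + 1))
        (((1 - w : ℝ) : 𝕜) • σ n)
      linarith
  -- uniform bound for every k
  have key2 : ∀ k : ℕ, (∃ C, ∀ n, ‖A n * (1 - σ k)‖ ≤ C) ∧
      (∃ C, ∀ n, ‖A n * (1 - σ (k + 1))‖ ≤ C) := by
    intro k
    induction k with
    | zero =>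
        refine ⟨⟨0, fun n => ?_⟩, ⟨5, h1⟩⟩
        simp [hσ₀]
    | succ k ih =>
        obtain ⟨⟨C₀, hC₀⟩, ⟨C₁, hC₁⟩⟩ := ih
        refine ⟨⟨C₁, hC₁⟩, ⟨(5 + C₁ + (1 - w) * C₀) / w, fun n => ?_⟩⟩
        have hr := hrec (k + 1) (by omega)
        simp only [Nat.add_sub_cancel] at hr
        have h3 : ∀ x : X →L[𝕜] X, A n * (σ 1 * x) = σ 1 * (A n * x) := fun x =>
          ((hAcomm n 1).symm.left_comm x).symm
        have hid : (w : 𝕜) • (A n * (1 - σ (k + 1 + 1))) =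
            A n * (1 - σ 1) + σ 1 * (A n * (1 - σ (k + 1)))
              - ((1 - w : ℝ) : 𝕜) • (A n * (1 - σ k)) := by
          have hinner : (w : 𝕜) • (1 - σ (k + 1 + 1)) =
              (1 - σ 1) + σ 1 * (1 - σ (k + 1)) - ((1 - w : ℝ) : 𝕜) • (1 - σ k) := by
            rw [mul_sub, mul_one, hr]
            simp only [RCLike.ofReal_sub, RCLike.ofReal_one]
            module
          calc (w : 𝕜) • (A n * (1 - σ (k + 1 + 1)))
              = A n * ((w : 𝕜) • (1 - σ (k + 1 + 1))) := (mul_smul_comm _ _ _).symm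
            _ = A n * ((1 - σ 1) + σ 1 * (1 - σ (k + 1))
                  - ((1 - w : ℝ) : 𝕜) • (1 - σ k)) := by rw [hinner]
            _ = A n * (1 - σ 1) + σ 1 * (A n * (1 - σ (k + 1)))
                  - ((1 - w : ℝ) : 𝕜) • (A n * (1 - σ k)) := by
                rw [mul_sub, mul_add, mul_smul_comm, h3]
        have hC₀0 : 0 ≤ C₀ := le_trans (norm_nonneg _) (hC₀ 0)
        have hC₁0 : 0 ≤ C₁ := le_trans (norm_nonneg _) (hC₁ 0)
        have hmul : ‖σ 1 * (A n * (1 - σ (k + 1)))‖ ≤ C₁ := by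
          calc ‖σ 1 * (A n * (1 - σ (k + 1)))‖ ≤ ‖σ 1‖ * ‖A n * (1 - σ (k + 1))‖ :=
                norm_mul_le _ _
            _ ≤ 1 * C₁ := by
                apply mul_le_mul (hσ_norm 1) (hC₁ n) (norm_nonneg _) zero_le_one
            _ = C₁ := one_mul _
        have hsc : ‖((1 - w : ℝ) : 𝕜) • (A n * (1 - σ k))‖ ≤ (1 - w) * C₀ := by
          rw [norm_smul ((1 - w : ℝ) : 𝕜) (A n * (1 - σ k)), hnw']
          exact mul_le_mul_of_nonneg_left (hC₀ n) hw1'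
        have hmain : w * ‖A n * (1 - σ (k + 1 + 1))‖ ≤ 5 + C₁ + (1 - w) * C₀ := by
          have h4 : ‖(w : 𝕜) • (A n * (1 - σ (k + 1 + 1)))‖
              = w * ‖A n * (1 - σ (k + 1 + 1))‖ := by
            rw [norm_smul ((w : ℝ) : 𝕜) (A n * (1 - σ (k + 1 + 1))), hnw]
          rw [← h4, hid]
          have t1 := norm_add_le (A n * (1 - σ 1)) (σ 1 * (A n * (1 - σ (k + 1))))
          have t2 := norm_sub_le (A n * (1 - σ 1) + σ 1 * (A n * (1 - σ (k + 1))))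
            (((1 - w : ℝ) : 𝕜) • (A n * (1 - σ k)))
          have := h1 n
          linarith
        rw [le_div_iff₀ hw0]
        linarith [hmain]
  -- conclusion
  intro k
  obtain ⟨C, hC⟩ := (key2 k).1
  have hC0 : 0 ≤ C := le_trans (norm_nonneg _) (hC 0)
  have hb : ∀ n : ℕ, ‖(S n).comp (1 - σ k)‖ ≤ C / ((n : ℝ) + 1) := by
    intro n
    have h2 : (S n).comp (1 - σ k) = S n * (1 - σ k) := rfl
    have hpos : (0 : ℝ) < (n : ℝ) + 1 := by positivity
    rw [h2, hS n, smul_mul_assoc,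
      norm_smul (((((n : ℝ) + 1) : ℝ) : 𝕜)⁻¹) ((∑ l ∈ Finset.range (n + 1), σ l) * (1 - σ k)),
      norm_inv, RCLike.norm_ofReal, abs_of_pos hpos]
    rw [div_eq_inv_mul]
    exact mul_le_mul_of_nonneg_left (hC n) (by positivity)
  have hlim : Filter.Tendsto (fun n : ℕ => C / ((n : ℝ) + 1)) Filter.atTop (nhds 0) := by
    have h := (tendsto_const_div_atTop_nhds_zero_nat C).comp (Filter.tendsto_add_atTop_nat 1)
    simpa [Function.comp_def] using h
  exact squeeze_zero (fun n => norm_nonneg _) hb hlim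
end

section
/- Let F_r be the free group on r ≥ 1 generators and let ℝ[F_r] be its real group algebra. For n ∈ ℕ define s_n = (1/|W_n|) Σ_{a ∈ W_n} a ∈ ℝ[F_r], where W_n is the set of elements of F_r of reduced word length n (so s_0 is the identity of ℝ[F_r]). Then, with w = (2r − 1)/(2r), for every n ≥ 1 one has s_1 · s_n = w · s_{n+1} + (1 − w) · s_{n−1} in ℝ[F_r]. -/
/-- The normalized sum `s_n = (1/|W_n|) Σ_{a ∈ W_n} a` in the real group algebra
of the free group on `r` generators, where `W_n` is the (finite) set of elements
of reduced word length `n`. -/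
noncomputable def sph (r n : ℕ) : MonoidAlgebra ℝ (FreeGroup (Fin r)) :=
  (({g : FreeGroup (Fin r) | g.toWord.length = n}).ncard : ℝ)⁻¹ •
    ∑ᶠ a ∈ {g : FreeGroup (Fin r) | g.toWord.length = n},
      MonoidAlgebra.of ℝ (FreeGroup (Fin r)) a

namespace Stmt15

open FreeGroup Finset

/-- W_n is finite. -/
lemma Wfinite (r n : ℕ) : {g : FreeGroup (Fin r) | g.toWord.length = n}.Finite :=
  (List.finite_length_eq _ n).preimage toWord_injective.injOn

/-- The sphere of radius `n` as a Finset. -/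
noncomputable def W (r n : ℕ) : Finset (FreeGroup (Fin r)) := (Wfinite r n).toFinset

lemma mem_W {r n : ℕ} {g : FreeGroup (Fin r)} : g ∈ W r n ↔ g.toWord.length = n := by
  simp [W]

/-- Unnormalized spherical sum. -/
noncomputable def S (r n : ℕ) : MonoidAlgebra ℝ (FreeGroup (Fin r)) :=
  ∑ a ∈ W r n, MonoidAlgebra.of ℝ (FreeGroup (Fin r)) a

lemma sph_eq (r n : ℕ) : sph r n = (((W r n).card : ℝ))⁻¹ • S r n := by
  rw [sph, S]
  rw [Set.ncard_eq_toFinset_card _ (Wfinite r n),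
    finsum_mem_eq_finite_toFinset_sum _ (Wfinite r n)]
  rfl

/-- single letter -/
def ltr {r : ℕ} (p : Fin r × Bool) : FreeGroup (Fin r) := mk [p]

@[simp] lemma toWord_ltr {r : ℕ} (p : Fin r × Bool) : (ltr p).toWord = [p] := by
  rw [ltr, toWord_mk, reduce_singleton]

lemma mem_W1 {r : ℕ} {x : FreeGroup (Fin r)} : x ∈ W r 1 ↔ ∃ p, x = ltr p := by
  rw [mem_W]
  constructor
  · intro h
    obtain ⟨p, hp⟩ := List.length_eq_one_iff.mp h
    exact ⟨p, by rw [← mk_toWord (x := x), hp]; rfl⟩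
  · rintro ⟨p, rfl⟩; simp

lemma toWord_ltr_mul {r : ℕ} (p : Fin r × Bool) (g : FreeGroup (Fin r)) :
    (ltr p * g).toWord =
      if g.toWord.head? = some (p.1, !p.2) then g.toWord.tail else p :: g.toWord := by
  conv_lhs => rw [← mk_toWord (x := g)]
  rw [ltr, mul_mk, toWord_mk, List.singleton_append, reduce.cons, reduce_toWord]
  cases h : g.toWord with
  | nil => simp
  | cons hd tl =>
    obtain ⟨a, b⟩ := p
    obtain ⟨c, d⟩ := hd
    cases b <;> cases d <;> simp [Prod.ext_iff, eq_comm, And.comm]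

lemma length_ltr_mul {r : ℕ} (p : Fin r × Bool) (g : FreeGroup (Fin r)) :
    (ltr p * g).toWord.length =
      if g.toWord.head? = some (p.1, !p.2) then g.toWord.length - 1
      else g.toWord.length + 1 := by
  rw [toWord_ltr_mul]
  split <;> simp [List.length_tail]

/-- the tail of a reduced word is reduced -/
lemma reduce_tail_eq {r : ℕ} {q : Fin r × Bool} {t : List (Fin r × Bool)}
    (h : reduce (q :: t) = q :: t) : reduce t = t := by
  rw [reduce.cons] at h
  cases ht : reduce t with
  | nil => rw [ht] at h; simp at h; simp [h]
  | cons hd tl =>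
    rw [ht] at h
    dsimp at h
    split_ifs at h with hc
    · exfalso
      have h1 : (reduce t).length ≤ t.length := (reduce.red (L := t)).length_le
      rw [ht, h] at h1
      simp at h1
    · exact (by simpa using h.symm : t = hd :: tl).symm

lemma ltr_inv {r : ℕ} (p : Fin r × Bool) : (ltr p)⁻¹ = ltr (p.1, !p.2) := by
  rw [ltr, ltr, inv_mk]
  congr 1

lemma W1_eq_image {r : ℕ} : W r 1 = Finset.image ltr Finset.univ := by
  ext x
  simp [mem_W1, eq_comm]

lemma ltr_injective {r : ℕ} : Function.Injective (ltr (r := r)) := by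
  intro p q h
  have := congrArg toWord h
  simpa using this

lemma card_W1 {r : ℕ} : (W r 1).card = 2 * r := by
  rw [W1_eq_image, Finset.card_image_of_injective _ ltr_injective]
  simp [Finset.card_univ, mul_comm]

lemma fiber_card {r n : ℕ} (hn : 1 ≤ n) {c : FreeGroup (Fin r)} (hc : c ∈ W r (n-1)) :
    ((W r 1).filter (fun x => (x⁻¹ * c).toWord.length = n)).card
      = (if n = 1 then 2 * r else 2 * r - 1) := by
  classical
  rw [mem_W] at hc
  rw [W1_eq_image, Finset.filter_image,
    Finset.card_image_of_injective _ ltr_injective]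
  have hcond : ∀ p : Fin r × Bool, ((ltr p)⁻¹ * c).toWord.length =
      if c.toWord.head? = some p then n - 1 - 1 else n - 1 + 1 := by
    intro p
    rw [ltr_inv, length_ltr_mul, hc]
    simp
  rcases hn.eq_or_lt with h1 | h2
  · -- n = 1
    subst h1
    have hcnil : c.toWord = [] := List.length_eq_zero_iff.mp hc
    simp only [hcond, hcnil, List.head?_nil, if_pos rfl]
    norm_num
    simp [Finset.card_univ, mul_comm]
  · -- n ≥ 2
    rw [if_neg (by omega)]
    obtain ⟨q0, t, hq⟩ : ∃ q0 t, c.toWord = q0 :: t := by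
      cases hw : c.toWord with
      | nil => exfalso; rw [hw] at hc; simp at hc; omega
      | cons a b => exact ⟨a, b, rfl⟩
    have : ∀ p : Fin r × Bool,
        (((ltr p)⁻¹ * c).toWord.length = n) ↔ p ≠ q0 := by
      intro p
      rw [hcond, hq]
      simp only [List.head?_cons, Option.some_inj]
      constructor
      · intro h
        intro hpq
        rw [if_pos hpq.symm] at h
        omega
      · intro h
        rw [if_neg (fun hh => h hh.symm)]
        omega
    simp only [this]
    rw [Finset.filter_ne', Finset.card_erase_of_mem (Finset.mem_univ _)]
    simp [Finset.card_univ, mul_comm]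

lemma key {r n : ℕ} (hn : 1 ≤ n) :
    S r 1 * S r n = S r (n + 1) +
      ((if n = 1 then 2 * r else 2 * r - 1 : ℕ) : ℝ) • S r (n - 1) := by
  classical
  rw [S, S, Finset.sum_mul_sum]
  simp_rw [← _root_.map_mul (MonoidAlgebra.of ℝ (FreeGroup (Fin r)))]
  rw [← Finset.sum_product']
  rw [← Finset.sum_filter_add_sum_filter_not (W r 1 ×ˢ W r n)
      (fun q => (q.1 * q.2).toWord.length = n + 1)]
  congr 1
  · -- non-cancelling part gives S r (n+1)
    rw [S]
    refine Finset.sum_nbij' (fun q => q.1 * q.2)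
      (fun b => (mk (b.toWord.take 1), (mk (b.toWord.take 1))⁻¹ * b)) ?_ ?_ ?_ ?_ ?_
    · intro q hq
      rw [Finset.mem_filter] at hq
      rw [mem_W]
      exact hq.2
    · intro b hb
      rw [mem_W] at hb
      obtain ⟨q0, t, hq⟩ : ∃ q0 t, b.toWord = q0 :: t := by
        cases hw : b.toWord with
        | nil => exfalso; rw [hw] at hb; simp at hb
        | cons a bb => exact ⟨a, bb, rfl⟩
      have hred : reduce (q0 :: t) = q0 :: t := by rw [← hq]; exact reduce_toWord b
      have ht : reduce t = t := reduce_tail_eq hred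
      have htake : b.toWord.take 1 = [q0] := by rw [hq]; rfl
      have hmul : (mk [q0] : FreeGroup (Fin r)) * mk t = b := by
        rw [mul_mk, List.singleton_append, ← hq, mk_toWord]
      have htlen : t.length = n := by
        have := hb; rw [hq] at this; simpa using this
      have hsnd : (mk (b.toWord.take 1) : FreeGroup (Fin r))⁻¹ * b = mk t := by
        rw [htake, ← hmul, inv_mul_cancel_left]
      rw [Finset.mem_filter, Finset.mem_product]
      refine ⟨⟨?_, ?_⟩, ?_⟩
      · rw [mem_W, htake]
        simp
      · rw [mem_W, hsnd, toWord_mk, ht]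
        exact htlen
      · dsimp only
        rw [mul_inv_cancel_left]
        exact hb
    · rintro ⟨x, a⟩ hq
      rw [Finset.mem_filter, Finset.mem_product] at hq
      obtain ⟨⟨hx, ha⟩, hcond⟩ := hq
      obtain ⟨p, rfl⟩ := mem_W1.mp hx
      rw [mem_W] at ha
      dsimp only at hcond ⊢
      have hword : (ltr p * a).toWord = p :: a.toWord := by
        rw [toWord_ltr_mul]
        split_ifs with hcan
        · exfalso
          rw [length_ltr_mul, if_pos hcan, ha] at hcond
          omega
        · rfl
      rw [hword]
      have htake : (p :: a.toWord).take 1 = [p] := rfl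
      rw [htake]
      have h1 : (mk [p] : FreeGroup (Fin r)) = ltr p := rfl
      rw [h1, inv_mul_cancel_left]
    · intro b _
      dsimp only
      rw [mul_inv_cancel_left]
    · intro q _
      rfl
  · -- cancelling part
    have hQ : ∑ q ∈ (W r 1 ×ˢ W r n).filter
          (fun q => ¬(q.1 * q.2).toWord.length = n + 1),
          MonoidAlgebra.of ℝ (FreeGroup (Fin r)) (q.1 * q.2)
        = ∑ q ∈ (W r (n - 1) ×ˢ W r 1).filter
            (fun q => (q.2⁻¹ * q.1).toWord.length = n),
            MonoidAlgebra.of ℝ (FreeGroup (Fin r)) q.1 := by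
      refine Finset.sum_nbij' (fun q => (q.1 * q.2, q.1))
        (fun q => (q.2, q.2⁻¹ * q.1)) ?_ ?_ ?_ ?_ ?_
      · rintro ⟨x, a⟩ hq
        rw [Finset.mem_filter, Finset.mem_product] at hq
        obtain ⟨⟨hx, ha⟩, hcond⟩ := hq
        obtain ⟨p, rfl⟩ := mem_W1.mp hx
        rw [mem_W] at ha
        dsimp only at hcond ⊢
        have hlen : (ltr p * a).toWord.length = n - 1 := by
          rw [length_ltr_mul]
          split_ifs with hcan
          · rw [ha]
          · exfalso
            rw [length_ltr_mul, if_neg hcan, ha] at hcond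
            omega
        rw [Finset.mem_filter, Finset.mem_product]
        refine ⟨⟨?_, hx⟩, ?_⟩
        · rw [mem_W]; exact hlen
        · dsimp only
          rw [inv_mul_cancel_left]
          exact ha
      · rintro ⟨c, x⟩ hq
        rw [Finset.mem_filter, Finset.mem_product] at hq
        obtain ⟨⟨hc, hx⟩, hcond⟩ := hq
        rw [mem_W] at hc
        rw [Finset.mem_filter, Finset.mem_product]
        refine ⟨⟨hx, ?_⟩, ?_⟩
        · rw [mem_W]; exact hcond
        · dsimp only
          rw [mul_inv_cancel_left, hc]
          omega
      · rintro ⟨x, a⟩ _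
        simp
      · rintro ⟨c, x⟩ _
        simp
      · rintro ⟨x, a⟩ _
        rfl
    rw [hQ, Finset.sum_filter, Finset.sum_product]
    have hfib : ∀ c ∈ W r (n - 1),
        (∑ x ∈ W r 1, if (x⁻¹ * c).toWord.length = n
            then MonoidAlgebra.of ℝ (FreeGroup (Fin r)) c else 0)
          = ((if n = 1 then 2 * r else 2 * r - 1 : ℕ) : ℝ) •
              MonoidAlgebra.of ℝ (FreeGroup (Fin r)) c := by
      intro c hc
      rw [← Finset.sum_filter, Finset.sum_const, fiber_card hn hc,
        Nat.cast_smul_eq_nsmul]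
    rw [Finset.sum_congr rfl hfib, ← Finset.smul_sum, S]

noncomputable def eps (r : ℕ) : MonoidAlgebra ℝ (FreeGroup (Fin r)) →ₐ[ℝ] ℝ :=
  MonoidAlgebra.lift ℝ ℝ (FreeGroup (Fin r)) 1

lemma eps_S (r n : ℕ) : eps r (S r n) = (W r n).card := by
  rw [S, map_sum]
  simp [eps, MonoidAlgebra.lift_of]

lemma card_W0 {r : ℕ} : (W r 0).card = 1 := by
  have : W r 0 = {1} := by
    ext g
    simp [mem_W, List.length_eq_zero_iff]
  rw [this, Finset.card_singleton]

lemma W_nonempty {r : ℕ} (hr : 1 ≤ r) (n : ℕ) : (W r n).Nonempty :=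
  ⟨(FreeGroup.of (⟨0, hr⟩ : Fin r)) ^ n, by rw [mem_W]; simp⟩

lemma cast_k {r : ℕ} (hr : 1 ≤ r) (n : ℕ) :
    ((if n = 1 then 2 * r else 2 * r - 1 : ℕ) : ℝ)
      = if n = 1 then 2 * (r : ℝ) else 2 * (r : ℝ) - 1 := by
  split
  · push_cast; ring
  · have h : 1 ≤ 2 * r := by omega
    push_cast [h]
    ring

lemma recurrence {r n : ℕ} (hr : 1 ≤ r) (hn : 1 ≤ n) :
    2 * (r : ℝ) * (W r n).card =
      (W r (n + 1)).card +
        (if n = 1 then 2 * (r : ℝ) else 2 * (r : ℝ) - 1) * (W r (n - 1)).card := by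
  have h := congrArg (eps r) (key hn (r := r))
  rw [_root_.map_mul, _root_.map_add, _root_.map_smul, eps_S, eps_S, eps_S, eps_S, cast_k hr] at h
  rw [card_W1, smul_eq_mul] at h
  push_cast at h ⊢
  linarith [h]

lemma ratio {r : ℕ} (hr : 1 ≤ r) :
    ∀ n : ℕ, 1 ≤ n → ((W r n).card : ℝ)
      = (if n = 1 then 2 * (r : ℝ) else 2 * (r : ℝ) - 1) * (W r (n - 1)).card := by
  intro n hn
  induction n, hn using Nat.le_induction with
  | base =>
    rw [if_pos rfl, card_W1, card_W0]
    push_cast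
    ring
  | succ n hn ih =>
    have hrec := recurrence hr hn
    rw [if_neg (by omega)]
    simp only [Nat.add_sub_cancel]
    linarith [hrec, ih]

end Stmt15


/-- In the real group algebra of the free group on `r ≥ 1` generators, the
normalized spherical sums `s_n` satisfy, with `w = (2r−1)/(2r)`,
`s_1 · s_n = w s_{n+1} + (1−w) s_{n−1}` for every `n ≥ 1`. -/
theorem stmt15 (r : ℕ) (hr : 1 ≤ r) :
    ∀ n : ℕ, 1 ≤ n →
      sph r 1 * sph r n =
        ((2 * (r : ℝ) - 1) / (2 * (r : ℝ))) • sph r (n + 1) +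
          (1 - (2 * (r : ℝ) - 1) / (2 * (r : ℝ))) • sph r (n - 1) := by
  intro n hn
  have hr1 : (1 : ℝ) ≤ (r : ℝ) := by exact_mod_cast hr
  have h2r : (2 * (r : ℝ)) ≠ 0 := by nlinarith
  have h2r1 : (2 * (r : ℝ) - 1) ≠ 0 := by nlinarith
  have hc0 : ((Stmt15.W r (n - 1)).card : ℝ) ≠ 0 := by
    have := Finset.card_pos.mpr (Stmt15.W_nonempty hr (n - 1))
    positivity
  have hcn : ((Stmt15.W r n).card : ℝ) ≠ 0 := by
    have := Finset.card_pos.mpr (Stmt15.W_nonempty hr n)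
    positivity
  have h1 : ((Stmt15.W r 1).card : ℝ) = 2 * (r : ℝ) := by
    rw [Stmt15.card_W1]; push_cast; ring
  have hn1 : ((Stmt15.W r n).card : ℝ)
      = (if n = 1 then 2 * (r : ℝ) else 2 * (r : ℝ) - 1) * (Stmt15.W r (n - 1)).card :=
    Stmt15.ratio hr n hn
  have hn2 : ((Stmt15.W r (n + 1)).card : ℝ) = (2 * (r : ℝ) - 1) * (Stmt15.W r n).card := by
    have h := Stmt15.ratio hr (n + 1) (by omega)
    rwa [if_neg (by omega), Nat.add_sub_cancel] at h
  have hK : (if n = 1 then 2 * (r : ℝ) else 2 * (r : ℝ) - 1) ≠ 0 := by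
    split <;> assumption
  rw [Stmt15.sph_eq, Stmt15.sph_eq, Stmt15.sph_eq, Stmt15.sph_eq]
  rw [smul_mul_smul_comm, Stmt15.key hn, smul_add]
  simp only [smul_smul]
  rw [Stmt15.cast_k hr]
  congr 1
  · congr 1
    rw [h1, hn2]
    field_simp
  · congr 1
    rw [h1, hn1]
    field_simp
    ring
end

section
/- Let F_r be the free group on r ≥ 1 generators and let ℝ[F_r] be its real group algebra. For n ∈ ℕ define s_n = (1/|W_n|) Σ_{a ∈ W_n} a ∈ ℝ[F_r], where W_n is the set of elements of F_r of reduced word length n. Then the elements s_n pairwise commute: s_m · s_n = s_n · s_m for all m, n ∈ ℕ. -/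
namespace Stmt16

open FreeGroup

variable {α : Type*} [DecidableEq α]

lemma reduce_cons_nil {x : α × Bool} {t} (h : reduce t = []) :
    reduce (x :: t) = [x] := by rw [FreeGroup.reduce.cons, h]

lemma reduce_cons_cons {x z : α × Bool} {t zs} (h : reduce t = z :: zs) :
    reduce (x :: t) = if x.1 = z.1 ∧ x.2 = !z.2 then zs else x :: z :: zs := by
  rw [FreeGroup.reduce.cons, h]

lemma reduce_length_le (t : List (α × Bool)) : (reduce t).length ≤ t.length :=
  FreeGroup.Red.length_le FreeGroup.reduce.red

lemma reduce_tail {y : α × Bool} {t} (h : reduce (y :: t) = y :: t) :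
    reduce t = t := by
  rcases hrt : reduce t with _ | ⟨z, zs⟩
  · rw [reduce_cons_nil hrt] at h
    injection h
  · rw [reduce_cons_cons hrt] at h
    by_cases hc : y.1 = z.1 ∧ y.2 = !z.2
    · rw [if_pos hc] at h
      have h1 := reduce_length_le t
      rw [hrt] at h1
      have h2 := congrArg List.length h
      simp at h1 h2
      omega
    · rw [if_neg hc] at h
      injection h

lemma reduced_cons_cons_not_cancel {y z : α × Bool} {zs}
    (h : reduce (y :: z :: zs) = y :: z :: zs) : ¬(y.1 = z.1 ∧ y.2 = !z.2) := by
  intro hc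
  have ht := reduce_tail h
  rw [reduce_cons_cons ht, if_pos hc] at h
  have := congrArg List.length h
  simp at this
  omega

omit [DecidableEq α] in
lemma cancel_iff (ℓ y : α × Bool) : (ℓ.1 = y.1 ∧ ℓ.2 = !y.2) ↔ y = (ℓ.1, !ℓ.2) := by
  rcases ℓ with ⟨a, b⟩; rcases y with ⟨c, d⟩
  simp only [Prod.mk.injEq]
  cases b <;> cases d <;> simp [eq_comm]


section
variable {r : ℕ}

lemma finite_W (r n : ℕ) : {g : FreeGroup (Fin r) | g.toWord.length = n}.Finite := by
  have h : {g : FreeGroup (Fin r) | g.toWord.length = n} ⊆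
      FreeGroup.toWord ⁻¹' {l : List (Fin r × Bool) | l.length = n} := fun g hg => hg
  exact (Set.Finite.preimage (FreeGroup.toWord_injective.injOn)
    (List.finite_length_eq _ n)).subset h

noncomputable def Wf (r n : ℕ) : Finset (FreeGroup (Fin r)) := (finite_W r n).toFinset

lemma mem_Wf {g : FreeGroup (Fin r)} {n : ℕ} : g ∈ Wf r n ↔ g.toWord.length = n :=
  Set.Finite.mem_toFinset _

noncomputable def A (r n : ℕ) : MonoidAlgebra ℝ (FreeGroup (Fin r)) :=
  ∑ g ∈ Wf r n, MonoidAlgebra.of ℝ (FreeGroup (Fin r)) g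

def gen (r : ℕ) (ℓ : Fin r × Bool) : FreeGroup (Fin r) := FreeGroup.mk [ℓ]

lemma toWord_gen (ℓ : Fin r × Bool) : (gen r ℓ).toWord = [ℓ] := by
  rw [gen, toWord_mk]; exact reduce_singleton _

lemma gen_injective : Function.Injective (gen r) := by
  intro a b h
  have h2 := congrArg FreeGroup.toWord h
  rw [toWord_gen, toWord_gen] at h2
  injection h2

lemma gen_inv (ℓ : Fin r × Bool) : (gen r ℓ)⁻¹ = gen r (ℓ.1, !ℓ.2) := by
  rw [gen, gen, inv_mk]; rfl

lemma Wf_one_eq : Wf r 1 = Finset.univ.image (gen r) := by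
  ext g
  simp only [mem_Wf, Finset.mem_image, Finset.mem_univ, true_and]
  constructor
  · intro h
    obtain ⟨ℓ, hℓ⟩ := List.length_eq_one_iff.mp h
    exact ⟨ℓ, by rw [gen, ← hℓ, mk_toWord]⟩
  · rintro ⟨ℓ, rfl⟩
    rw [toWord_gen]
    rfl

lemma gen_mul (ℓ : Fin r × Bool) (g : FreeGroup (Fin r)) :
    (gen r ℓ * g).toWord = reduce (ℓ :: g.toWord) := by
  conv_lhs => rw [← mk_toWord (x := g)]
  rw [gen, mul_mk, toWord_mk]
  rfl

lemma gen_mul_nil {g : FreeGroup (Fin r)} (hg : g.toWord = []) (ℓ : Fin r × Bool) :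
    (gen r ℓ * g).toWord = [ℓ] := by
  rw [gen_mul, hg]; exact reduce_singleton _

lemma gen_mul_cancel {g : FreeGroup (Fin r)} {y t} (hg : g.toWord = y :: t)
    {ℓ : Fin r × Bool} (hc : y = (ℓ.1, !ℓ.2)) : (gen r ℓ * g).toWord = t := by
  have hred : reduce (y :: t) = y :: t := by rw [← hg]; exact reduce_toWord g
  rw [gen_mul, hg, reduce_cons_cons hred, if_pos ((cancel_iff ℓ y).mpr hc)]

lemma gen_mul_nocancel {g : FreeGroup (Fin r)} {y t} (hg : g.toWord = y :: t)
    {ℓ : Fin r × Bool} (hc : y ≠ (ℓ.1, !ℓ.2)) :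
    (gen r ℓ * g).toWord = ℓ :: y :: t := by
  have hred : reduce (y :: t) = y :: t := by rw [← hg]; exact reduce_toWord g
  rw [gen_mul, hg, reduce_cons_cons hred, if_neg (fun h => hc ((cancel_iff ℓ y).mp h))]

lemma A_zero (r : ℕ) : A r 0 = 1 := by
  have : Wf r 0 = {1} := by
    ext g
    simp [mem_Wf, List.length_eq_zero_iff, toWord_eq_nil_iff]
  rw [A, this, Finset.sum_singleton]
  exact map_one _


lemma part1 (r n : ℕ) (hn : 1 ≤ n) (ℓ : Fin r × Bool) :
    ∑ g ∈ (Wf r n).filter (fun g => ¬(g.toWord.head? = some (ℓ.1, !ℓ.2))),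
      MonoidAlgebra.of ℝ (FreeGroup (Fin r)) (gen r ℓ * g)
    = ∑ h ∈ (Wf r (n+1)).filter (fun h => h.toWord.head? = some ℓ),
      MonoidAlgebra.of ℝ (FreeGroup (Fin r)) h := by
  refine Finset.sum_nbij' (fun g => gen r ℓ * g) (fun h => (gen r ℓ)⁻¹ * h)
    ?_ ?_ ?_ ?_ ?_
  · intro g hg
    simp only [Finset.mem_filter, mem_Wf] at hg ⊢
    rcases hw : g.toWord with _ | ⟨y, t⟩
    · rw [hw] at hg; simp at hg; omega
    · have hy : y ≠ (ℓ.1, !ℓ.2) := by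
        intro h; apply hg.2; rw [hw, h]; rfl
      rw [gen_mul_nocancel hw hy]
      refine ⟨?_, rfl⟩
      have := hg.1; rw [hw] at this
      simpa using this
  · intro h hh
    simp only [Finset.mem_filter, mem_Wf] at hh ⊢
    rcases hw : h.toWord with _ | ⟨y, t⟩
    · rw [hw] at hh; simp at hh
    · rw [hw] at hh
      have hy : y = ℓ := by
        have := hh.2; simp at this; exact this
      subst hy
      have hc : y = ((y.1, !y.2).1, !(y.1, !y.2).2) := by simp
      rw [gen_inv, gen_mul_cancel hw hc]
      have hlen := hh.1; simp at hlen
      refine ⟨hlen, ?_⟩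
      rcases t with _ | ⟨z, zs⟩
      · simp
      · have hred : reduce (y :: z :: zs) = y :: z :: zs := by
          rw [← hw]; exact reduce_toWord h
        have hnc := reduced_cons_cons_not_cancel hred
        have hz : z ≠ (y.1, !y.2) := fun hzz => hnc ((cancel_iff y z).mpr hzz)
        simpa using hz
  · intro g _; exact inv_mul_cancel_left _ _
  · intro h _; exact mul_inv_cancel_left _ _
  · intro g _; rfl

lemma part2 (r n : ℕ) (hn : 1 ≤ n) (ℓ : Fin r × Bool) :
    ∑ g ∈ (Wf r n).filter (fun g => g.toWord.head? = some (ℓ.1, !ℓ.2)),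
      MonoidAlgebra.of ℝ (FreeGroup (Fin r)) (gen r ℓ * g)
    = ∑ h ∈ (Wf r (n-1)).filter (fun h => ¬(h.toWord.head? = some ℓ)),
      MonoidAlgebra.of ℝ (FreeGroup (Fin r)) h := by
  refine Finset.sum_nbij' (fun g => gen r ℓ * g) (fun h => (gen r ℓ)⁻¹ * h)
    ?_ ?_ ?_ ?_ ?_
  · intro g hg
    simp only [Finset.mem_filter, mem_Wf] at hg ⊢
    rcases hw : g.toWord with _ | ⟨y, t⟩
    · rw [hw] at hg; simp at hg
    · rw [hw] at hg
      have hy : y = (ℓ.1, !ℓ.2) := by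
        have := hg.2; simp at this; exact this
      rw [gen_mul_cancel hw hy]
      have hlen := hg.1; simp at hlen
      refine ⟨by omega, ?_⟩
      rcases t with _ | ⟨z, zs⟩
      · simp
      · have hred : reduce (y :: z :: zs) = y :: z :: zs := by
          rw [← hw]; exact reduce_toWord g
        have hnc := reduced_cons_cons_not_cancel hred
        have hz : z ≠ (y.1, !y.2) := fun hzz => hnc ((cancel_iff y z).mpr hzz)
        have : (y.1, !y.2) = ℓ := by rw [hy]; simp
        rw [this] at hz
        simpa using hz
  · intro h hh
    simp only [Finset.mem_filter, mem_Wf] at hh ⊢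
    rw [gen_inv]
    rcases hw : h.toWord with _ | ⟨z, zs⟩
    · rw [hw] at hh
      simp at hh
      rw [gen_mul_nil hw]
      constructor
      · simp; omega
      · rfl
    · rw [hw] at hh
      have hz : z ≠ ((ℓ.1, !ℓ.2).1, !(ℓ.1, !ℓ.2).2) := by
        have := hh.2; simp at this
        intro hzz; apply this; rw [hzz]; simp
      rw [gen_mul_nocancel hw hz]
      have hlen := hh.1; simp at hlen
      constructor
      · simp; omega
      · rfl
  · intro g _; exact inv_mul_cancel_left _ _
  · intro h _; exact mul_inv_cancel_left _ _
  · intro g _; rfl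


lemma key (r n : ℕ) (hn : 1 ≤ n) : ∃ c : ℝ,
    A r 1 * A r n = A r (n + 1) + c • A r (n - 1) := by
  classical
  set cN : ℕ := if n = 1 then Fintype.card (Fin r × Bool)
    else Fintype.card (Fin r × Bool) - 1 with hcN
  refine ⟨(cN : ℝ), ?_⟩
  have expand : A r 1 * A r n = ∑ ℓ : Fin r × Bool, ∑ g ∈ Wf r n,
      MonoidAlgebra.of ℝ (FreeGroup (Fin r)) (gen r ℓ * g) := by
    rw [A, A, Finset.sum_mul_sum, Wf_one_eq,
      Finset.sum_image (fun a _ b _ h => gen_injective h)]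
    exact Finset.sum_congr rfl fun ℓ _ => Finset.sum_congr rfl fun g _ =>
      (_root_.map_mul (MonoidAlgebra.of ℝ (FreeGroup (Fin r))) _ _).symm
  have split : ∀ ℓ : Fin r × Bool,
      (∑ g ∈ Wf r n, MonoidAlgebra.of ℝ (FreeGroup (Fin r)) (gen r ℓ * g)) =
      (∑ g ∈ (Wf r n).filter (fun g => g.toWord.head? = some (ℓ.1, !ℓ.2)),
        MonoidAlgebra.of ℝ (FreeGroup (Fin r)) (gen r ℓ * g))
      + ∑ g ∈ (Wf r n).filter (fun g => ¬(g.toWord.head? = some (ℓ.1, !ℓ.2))),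
        MonoidAlgebra.of ℝ (FreeGroup (Fin r)) (gen r ℓ * g) :=
    fun ℓ => (Finset.sum_filter_add_sum_filter_not _ _ _).symm
  have step : A r 1 * A r n =
      (∑ ℓ : Fin r × Bool, ∑ h ∈ (Wf r (n-1)).filter
          (fun h => ¬(h.toWord.head? = some ℓ)),
        MonoidAlgebra.of ℝ (FreeGroup (Fin r)) h)
      + ∑ ℓ : Fin r × Bool, ∑ h ∈ (Wf r (n+1)).filter
          (fun h => h.toWord.head? = some ℓ),
        MonoidAlgebra.of ℝ (FreeGroup (Fin r)) h := by
    rw [expand, ← Finset.sum_add_distrib]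
    exact Finset.sum_congr rfl fun ℓ _ => by
      rw [split ℓ, part2 r n hn ℓ, part1 r n hn ℓ]
  have pieceB : ∑ ℓ : Fin r × Bool, ∑ h ∈ (Wf r (n+1)).filter
      (fun h => h.toWord.head? = some ℓ),
      MonoidAlgebra.of ℝ (FreeGroup (Fin r)) h = A r (n+1) := by
    have h0 : ∑ o : Option (Fin r × Bool), ∑ h ∈ (Wf r (n+1)).filter
        (fun h => h.toWord.head? = o),
        MonoidAlgebra.of ℝ (FreeGroup (Fin r)) h = A r (n+1) := by
      rw [A]
      exact Finset.sum_fiberwise_of_maps_to (fun i _ => Finset.mem_univ _) _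
    rw [Fintype.sum_option] at h0
    have hnone : (Wf r (n+1)).filter
        (fun h : FreeGroup (Fin r) => h.toWord.head? = none) = ∅ := by
      ext h
      simp only [Finset.mem_filter, mem_Wf, Finset.notMem_empty, iff_false, not_and]
      intro h1 h2
      rw [List.head?_eq_none_iff] at h2
      rw [h2] at h1
      simp at h1
    rw [hnone, Finset.sum_empty, zero_add] at h0
    exact h0
  have pieceA : ∑ ℓ : Fin r × Bool, ∑ h ∈ (Wf r (n-1)).filter
      (fun h => ¬(h.toWord.head? = some ℓ)),
      MonoidAlgebra.of ℝ (FreeGroup (Fin r)) h = (cN : ℝ) • A r (n-1) := by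
    simp_rw [Finset.sum_filter]
    rw [Finset.sum_comm, A, Nat.cast_smul_eq_nsmul, Finset.smul_sum]
    refine Finset.sum_congr rfl fun h hh => ?_
    rw [← Finset.sum_filter, Finset.sum_const]
    congr 1
    rcases hw : h.toWord with _ | ⟨y, t⟩
    · have hn1 : n = 1 := by
        have := mem_Wf.mp hh
        rw [hw] at this
        simp at this
        omega
      rw [hcN, if_pos hn1]
      have heq : Finset.univ.filter
          (fun ℓ : Fin r × Bool => ¬(([] : List (Fin r × Bool)).head? = some ℓ))
          = Finset.univ := by
        ext ℓ; simp
      rw [heq, Finset.card_univ]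
    · have hn2 : ¬(n = 1) := by
        have := mem_Wf.mp hh
        rw [hw] at this
        simp at this
        omega
      rw [hcN, if_neg hn2]
      have heq : Finset.univ.filter
          (fun ℓ : Fin r × Bool => ¬((y :: t).head? = some ℓ))
          = Finset.univ.erase y := by
        ext ℓ
        simp [eq_comm]
      rw [heq, Finset.card_erase_of_mem (Finset.mem_univ _), Finset.card_univ]
  rw [step, pieceA, pieceB, add_comm]

lemma A_mem (r : ℕ) : ∀ n : ℕ, A r n ∈ Algebra.adjoin ℝ {A r 1} := by
  intro n
  induction n using Nat.strong_induction_on with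
  | _ n ih =>
    match n with
    | 0 => rw [A_zero]; exact one_mem _
    | 1 => exact Algebra.self_mem_adjoin_singleton ℝ _
    | (k + 2) =>
      obtain ⟨c, hc⟩ := key r (k + 1) (by omega)
      have hk : k + 1 - 1 = k := by omega
      rw [hk] at hc
      have : A r (k + 2) = A r 1 * A r (k + 1) - c • A r k := by
        rw [hc]; ring_nf; abel
      rw [this]
      exact sub_mem (mul_mem (ih 1 (by omega)) (ih (k+1) (by omega)))
        (Subalgebra.smul_mem _ (ih k (by omega)) c)

lemma A_comm (r m n : ℕ) : A r m * A r n = A r n * A r m :=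
  (Algebra.commute_of_mem_adjoin_singleton_of_commute (A_mem r n)
    ((Algebra.commute_of_mem_adjoin_self (A_mem r m)).symm))

lemma sph_eq (r n : ℕ) : sph r n =
    (({g : FreeGroup (Fin r) | g.toWord.length = n}).ncard : ℝ)⁻¹ • A r n := by
  rw [sph, A, Wf]
  congr 1
  exact finsum_mem_eq_finite_toFinset_sum _ (finite_W r n)

end

end Stmt16

/-- In the real group algebra of the free group on `r ≥ 1` generators, the
normalized spherical sums `s_n` pairwise commute: `s_m · s_n = s_n · s_m`. -/
theorem stmt16 (r : ℕ) (hr : 1 ≤ r) :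
    ∀ m n : ℕ, sph r m * sph r n = sph r n * sph r m := by
  intro m n
  rw [Stmt16.sph_eq r m, Stmt16.sph_eq r n, smul_mul_assoc, smul_mul_assoc,
    mul_smul_comm, mul_smul_comm, Stmt16.A_comm r m n, smul_comm]
end
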